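/- arXiv:2011.10403 — 8 statements merged into one kernel-verified Lean document; each statement's English description precedes it below -/
import Mathlib

section
/- For m ≥ n ≥ 1, the complete bridge graph B_{m,n} is a minimally connected prime graph if and only if either m ≥ n > 1, or m ∈ {1,2} and n = 1. -/
open SimpleGraph

def bridgeAdj (m n : ℕ) : (Fin m ⊕ Fin n) → (Fin m ⊕ Fin n) → Prop
  | Sum.inl i, Sum.inl j => i ≠ j
  | Sum.inr i, Sum.inr j => i ≠ j
  | Sum.inl i, Sum.inr j => i.val = 0 ∧ j.val = 0
  | Sum.inr i, Sum.inl j => i.val = 0 ∧ j.val = 0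

/-- The complete bridge graph `B_{m,n}`: two disjoint complete graphs on `m` and `n`
vertices respectively, joined by exactly one edge (the bridge). -/
def completeBridgeGraph (m n : ℕ) : SimpleGraph (Fin m ⊕ Fin n) where
  Adj := bridgeAdj m n
  symm := by
    constructor
    rintro (a | a) (b | b) h <;> simp_all [bridgeAdj] <;> tauto
  loopless := by
    constructor
    rintro (a | a) h <;> simp_all [bridgeAdj]

variable {m n : ℕ}

@[simp] lemma cbg_ll {i j : Fin m} :
    (completeBridgeGraph m n).Adj (Sum.inl i) (Sum.inl j) ↔ i ≠ j := Iff.rfl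
@[simp] lemma cbg_rr {i j : Fin n} :
    (completeBridgeGraph m n).Adj (Sum.inr i) (Sum.inr j) ↔ i ≠ j := Iff.rfl
@[simp] lemma cbg_lr {i : Fin m} {j : Fin n} :
    (completeBridgeGraph m n).Adj (Sum.inl i) (Sum.inr j) ↔ i.val = 0 ∧ j.val = 0 := Iff.rfl
@[simp] lemma cbg_rl {i : Fin n} {j : Fin m} :
    (completeBridgeGraph m n).Adj (Sum.inr i) (Sum.inl j) ↔ i.val = 0 ∧ j.val = 0 := Iff.rfl

lemma cbg_connected (hm : 0 < m) (hn : 0 < n) : (completeBridgeGraph m n).Connected := by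
  rw [connected_iff]
  refine ⟨?_, ⟨Sum.inl ⟨0, hm⟩⟩⟩
  have key : ∀ x, (completeBridgeGraph m n).Reachable x (Sum.inl ⟨0, hm⟩) := by
    rintro (i | j)
    · by_cases h : i = ⟨0, hm⟩
      · exact h ▸ Reachable.refl _
      · exact (Adj.reachable (by simpa using h))
    · have h1 : (completeBridgeGraph m n).Reachable (Sum.inr j) (Sum.inr ⟨0, hn⟩) := by
        by_cases h : j = ⟨0, hn⟩
        · exact h ▸ Reachable.refl _
        · exact (Adj.reachable (by simpa using h))
      exact h1.trans (Adj.reachable (by simp))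
  exact fun x y => (key x).trans (key y).symm

lemma cbg_compl_cf : (completeBridgeGraph m n)ᶜ.CliqueFree 3 := by
  intro s hs
  rw [is3Clique_iff] at hs
  obtain ⟨a, b, c, hab, hac, hbc, -⟩ := hs
  have ns : ∀ (x y : Fin m ⊕ Fin n), (completeBridgeGraph m n)ᶜ.Adj x y →
      x.isLeft ≠ y.isLeft := by
    rintro (i | i) (j | j) h <;> simp_all [compl_adj]
  rcases a with i | i <;> rcases b with j | j <;> rcases c with k | k <;>
    simp_all

lemma cbg_compl_col : (completeBridgeGraph m n)ᶜ.Colorable 3 := by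
  refine ⟨Coloring.mk (Sum.elim (fun _ => 0) (fun _ => 1)) ?_⟩
  rintro (i | i) (j | j) h <;> simp_all [compl_adj]

section gen
variable {V : Type} {G : SimpleGraph V}

lemma walk_inv (P : V → Prop) (h : ∀ x y, G.Adj x y → P x → P y) :
    ∀ {x y}, G.Walk x y → P x → P y := by
  intro x y w
  induction w with
  | nil => exact id
  | cons h' _ ih => exact fun hx => ih (h _ _ h' hx)

lemma not_reach_isolated {v x : V} (h : ∀ y, ¬ G.Adj v y) (hvx : v ≠ x) :
    ¬ G.Reachable v x := by
  rintro ⟨w⟩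
  cases w with
  | nil => exact hvx rfl
  | cons h' _ => exact h _ h'

lemma not_cf3 [DecidableEq V] {a b c : V} (hab : G.Adj a b) (hac : G.Adj a c)
    (hbc : G.Adj b c) : ¬ G.CliqueFree 3 :=
  fun h => h {a,b,c} (is3Clique_triple_iff.mpr ⟨hab, hac, hbc⟩)
end gen

lemma del_bridge_disc {i0 : Fin m} {j0 : Fin n} (hi : i0.val = 0) (hj : j0.val = 0) :
    ¬ ((completeBridgeGraph m n).deleteEdges {s(Sum.inl i0, Sum.inr j0)}).Connected := by
  intro hc
  obtain ⟨w⟩ := hc.preconnected (Sum.inl i0) (Sum.inr j0)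
  have step : ∀ x y, ((completeBridgeGraph m n).deleteEdges
      {s(Sum.inl i0, Sum.inr j0)}).Adj x y → x.isLeft = true → y.isLeft = true := by
    rintro (a | a) (b | b) h hx
    · rfl
    · exfalso
      rw [deleteEdges_adj] at h
      obtain ⟨⟨h1, h2⟩, h3⟩ := h
      have ha : a = i0 := Fin.ext (by omega)
      have hb : b = j0 := Fin.ext (by omega)
      exact h3 (by rw [ha, hb]; rfl)
    · simp at hx
    · simp at hx
  have := walk_inv _ step w rfl
  simp at this

lemma del_ll_not_cf (hn2 : 2 ≤ n) {i j : Fin m} (hij : i ≠ j) :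
    ¬ ((completeBridgeGraph m n).deleteEdges {s(Sum.inl i, Sum.inl j)})ᶜ.CliqueFree 3 := by
  refine not_cf3 (a := Sum.inl i) (b := Sum.inl j) (c := Sum.inr ⟨1, hn2⟩) ?_ ?_ ?_ <;>
    simp [compl_adj, deleteEdges_adj, hij]

lemma del_rr_not_cf (hm2 : 2 ≤ m) {i j : Fin n} (hij : i ≠ j) :
    ¬ ((completeBridgeGraph m n).deleteEdges {s(Sum.inr i, Sum.inr j)})ᶜ.CliqueFree 3 := by
  refine not_cf3 (a := Sum.inr i) (b := Sum.inr j) (c := Sum.inl ⟨1, hm2⟩) ?_ ?_ ?_ <;>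
    simp [compl_adj, deleteEdges_adj, hij]

lemma del_m2_disc (_hn : n = 1) {i j : Fin m} (hi : i.val = 0) (hj : j.val = 1)
    (hm : m = 2) :
    ¬ ((completeBridgeGraph m n).deleteEdges {s(Sum.inl i, Sum.inl j)}).Connected := by
  intro hc
  refine not_reach_isolated (G := (completeBridgeGraph m n).deleteEdges
      {s(Sum.inl i, Sum.inl j)}) (v := Sum.inl j) (x := Sum.inl i) ?_ ?_
      (hc.preconnected _ _)
  · rintro (k | k) hy <;> rw [deleteEdges_adj] at hy
    · obtain ⟨hadj, hne⟩ := hy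
      simp only [cbg_ll] at hadj
      have hki : k = i := by
        apply Fin.ext
        have := k.isLt
        have := Fin.val_ne_iff.mpr hadj
        omega
      subst hki
      exact hne (by rw [Sym2.eq_swap]; rfl)
    · obtain ⟨hadj, -⟩ := hy
      simp only [cbg_lr] at hadj
      omega
  · simp only [ne_eq, Sum.inl.injEq]
    intro h; rw [h] at hj; omega

def delG (m : ℕ) (hm3 : 3 ≤ m) : SimpleGraph (Fin m ⊕ Fin 1) :=
  (completeBridgeGraph m 1).deleteEdges
    {s(Sum.inl ⟨0, by omega⟩, Sum.inl (⟨1, by omega⟩ : Fin m))}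

section fwd
variable (hm3 : 3 ≤ m)

local notation "G'" => delG m hm3

lemma delG_def : G' = (completeBridgeGraph m 1).deleteEdges
    {s(Sum.inl ⟨0, by omega⟩, Sum.inl (⟨1, by omega⟩ : Fin m))} := rfl

lemma fwd_charL {i j : Fin m} (h : (G')ᶜ.Adj (Sum.inl i) (Sum.inl j)) :
    (i.val = 0 ∧ j.val = 1) ∨ (i.val = 1 ∧ j.val = 0) := by
  rw [show (G') = _ from delG_def hm3] at h
  rw [compl_adj, deleteEdges_adj] at h
  obtain ⟨hne, hor⟩ := h
  have hij : i ≠ j := fun h' => hne (by rw [h'])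
  have hmem : s(Sum.inl i, (Sum.inl j : Fin m ⊕ Fin 1)) ∈
      ({s(Sum.inl ⟨0, by omega⟩, Sum.inl (⟨1, by omega⟩ : Fin m))} :
        Set (Sym2 (Fin m ⊕ Fin 1))) := by
    by_contra hmem
    exact hor ⟨hij, hmem⟩
  rw [Set.mem_singleton_iff, Sym2.eq_iff] at hmem
  simp only [Sum.inl.injEq] at hmem
  rcases hmem with ⟨h1, h2⟩ | ⟨h1, h2⟩
  · left; exact ⟨by rw [h1], by rw [h2]⟩
  · right; exact ⟨by rw [h1], by rw [h2]⟩

lemma fwd_charLR {i : Fin m} {j : Fin 1} (h : (G')ᶜ.Adj (Sum.inl i) (Sum.inr j)) :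
    i.val ≠ 0 := by
  rw [show (G') = _ from delG_def hm3] at h
  rw [compl_adj, deleteEdges_adj] at h
  obtain ⟨-, hor⟩ := h
  intro hi0
  refine hor ⟨⟨hi0, by omega⟩, ?_⟩
  rw [Set.mem_singleton_iff, Sym2.eq_iff]
  rintro (⟨-, h2⟩ | ⟨-, h2⟩) <;> exact absurd h2 (by simp)

lemma fwd_charRR {i j : Fin 1} : ¬ (G')ᶜ.Adj (Sum.inr i) (Sum.inr j) := by
  rw [compl_adj]
  rintro ⟨hne, -⟩
  exact hne (by rw [Subsingleton.elim i j])

lemma fwd_conn : (G').Connected := by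
  rw [connected_iff]
  refine ⟨?_, ⟨Sum.inl ⟨0, by omega⟩⟩⟩
  have adjd : ∀ (a b : Fin m ⊕ Fin 1), (completeBridgeGraph m 1).Adj a b →
      s(a, b) ≠ s(Sum.inl ⟨0, by omega⟩, Sum.inl (⟨1, by omega⟩ : Fin m)) →
      (G').Adj a b := by
    intro a b h1 h2
    rw [delG_def hm3, deleteEdges_adj]
    exact ⟨h1, by rwa [Set.mem_singleton_iff]⟩
  have key : ∀ x, (G').Reachable x (Sum.inl ⟨0, by omega⟩) := by
    rintro (i | j)
    · rcases Nat.lt_or_ge i.val 2 with hi | hi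
      · rcases Nat.lt_or_ge i.val 1 with hi0 | hi1
        · have : i = ⟨0, by omega⟩ := by simp only [Fin.ext_iff]; omega
          rw [this]
        · have r1 : (G').Adj (Sum.inl i) (Sum.inl ⟨2, by omega⟩) := by
            refine adjd _ _ ?_ ?_
            · rw [cbg_ll]; simp only [ne_eq, Fin.ext_iff]; omega
            · simp only [ne_eq, Sym2.eq_iff, Sum.inl.injEq, Fin.ext_iff]; omega
          have r2 : (G').Adj (Sum.inl ⟨2, by omega⟩) (Sum.inl ⟨0, by omega⟩) := by
            refine adjd _ _ ?_ ?_
            · rw [cbg_ll]; simp only [ne_eq, Fin.ext_iff]; omega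
            · simp only [ne_eq, Sym2.eq_iff, Sum.inl.injEq, Fin.ext_iff]; omega
          exact (r1.reachable).trans r2.reachable
      · refine Adj.reachable (adjd _ _ ?_ ?_)
        · rw [cbg_ll]; simp only [ne_eq, Fin.ext_iff]; omega
        · simp only [ne_eq, Sym2.eq_iff, Sum.inl.injEq, Fin.ext_iff]; omega
    · refine Adj.reachable (adjd _ _ ?_ ?_)
      · rw [cbg_rl]; exact ⟨by omega, rfl⟩
      · simp
  exact fun x y => (key x).trans (key y).symm

lemma fwd_cf : (G')ᶜ.CliqueFree 3 := by
  intro s hs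
  rw [is3Clique_iff] at hs
  obtain ⟨a, b, c, hab, hac, hbc, -⟩ := hs
  rcases a with i | i <;> rcases b with j | j <;> rcases c with k | k
  · have h1 := fwd_charL hm3 hab
    have h2 := fwd_charL hm3 hac
    have h3 := fwd_charL hm3 hbc
    omega
  · have h1 := fwd_charL hm3 hab
    have h2 := fwd_charLR hm3 hac
    have h3 := fwd_charLR hm3 hbc
    omega
  · have h1 := fwd_charLR hm3 hab
    have h2 := fwd_charL hm3 hac
    have h3 := fwd_charLR hm3 hbc.symm
    omega
  · exact fwd_charRR hm3 hbc
  · have h1 := fwd_charLR hm3 hab.symm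
    have h2 := fwd_charLR hm3 hac.symm
    have h3 := fwd_charL hm3 hbc
    omega
  · exact fwd_charRR hm3 hac
  · exact fwd_charRR hm3 hab
  · exact fwd_charRR hm3 hab

lemma fwd_col : (G')ᶜ.Colorable 3 := by
  refine ⟨Coloring.mk (Sum.elim (fun i => if i.val = 0 then 0 else 1) (fun _ => 2)) ?_⟩
  rintro (i | i) (j | j) h
  · have := fwd_charL hm3 h
    rcases this with ⟨h1, h2⟩ | ⟨h1, h2⟩ <;> simp [h1, h2]
  · simp only [Sum.elim_inl, Sum.elim_inr]
    split <;> decide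
  · simp only [Sum.elim_inl, Sum.elim_inr]
    split <;> decide
  · exact absurd h (fwd_charRR hm3)
end fwd

/-- A minimally connected prime graph (MCPG). -/
def IsMCPG {V : Type} [Fintype V] (Γ : SimpleGraph V) : Prop :=
  2 ≤ Fintype.card V ∧ Γ.Connected ∧ Γᶜ.CliqueFree 3 ∧ Γᶜ.Colorable 3 ∧
    ∀ e ∈ Γ.edgeSet,
      ¬((Γ.deleteEdges {e}).Connected ∧ (Γ.deleteEdges {e})ᶜ.CliqueFree 3 ∧
        (Γ.deleteEdges {e})ᶜ.Colorable 3)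

/-- A minimal prime graph (MPG). -/
def IsMPG {V : Type} [Fintype V] (Γ : SimpleGraph V) : Prop :=
  2 ≤ Fintype.card V ∧ Γ.Connected ∧ Γᶜ.CliqueFree 3 ∧ Γᶜ.Colorable 3 ∧
    ∀ e ∈ Γ.edgeSet,
      ¬((Γ.deleteEdges {e})ᶜ.CliqueFree 3 ∧ (Γ.deleteEdges {e})ᶜ.Colorable 3)

/-- A possibly disconnected minimal prime graph (PDMPG). -/
def IsPDMPG {V : Type} [Fintype V] (Γ : SimpleGraph V) : Prop :=
  Γᶜ.CliqueFree 3 ∧ Γᶜ.Colorable 3 ∧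
    ∀ e ∈ Γ.edgeSet,
      ¬((Γ.deleteEdges {e})ᶜ.CliqueFree 3 ∧ (Γ.deleteEdges {e})ᶜ.Colorable 3)

/-- For `m ≥ n ≥ 1`, the complete bridge graph `B_{m,n}` is a minimally connected prime
graph if and only if either `m ≥ n > 1`, or `m ∈ {1,2}` and `n = 1`. -/
theorem stmt0 (m n : ℕ) (h1 : 1 ≤ n) (h2 : n ≤ m) :
    IsMCPG (completeBridgeGraph m n) ↔
      (n ≤ m ∧ 1 < n) ∨ ((m = 1 ∨ m = 2) ∧ n = 1) := by
  constructor
  · intro h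
    by_contra hc
    have hn1 : n = 1 := by
      by_contra h'
      exact hc (Or.inl ⟨h2, by omega⟩)
    have hm3 : 3 ≤ m := by
      by_contra h'
      exact hc (Or.inr ⟨by omega, hn1⟩)
    subst hn1
    obtain ⟨-, -, -, -, hmin⟩ := h
    exact hmin s(Sum.inl ⟨0, by omega⟩, Sum.inl (⟨1, by omega⟩ : Fin m))
      (by rw [mem_edgeSet, cbg_ll]; simp only [ne_eq, Fin.ext_iff]; omega)
      ⟨fwd_conn hm3, fwd_cf hm3, fwd_col hm3⟩
  · intro hcase
    refine ⟨?_, cbg_connected (by omega) (by omega), cbg_compl_cf, cbg_compl_col, ?_⟩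
    · rw [Fintype.card_sum, Fintype.card_fin, Fintype.card_fin]; omega
    · intro e
      induction e using Sym2.ind with
      | _ x y =>
        intro he hbad
        rw [mem_edgeSet] at he
        obtain ⟨hconn, hcf, -⟩ := hbad
        rcases x with i | i <;> rcases y with j | j
        · rw [cbg_ll] at he
          rcases hcase with ⟨-, hn2⟩ | ⟨hm12, hn1⟩
          · exact del_ll_not_cf hn2 he hcf
          · have hm2 : m = 2 := by
              rcases hm12 with rfl | rfl
              · exact absurd (Subsingleton.elim i j) he
              · rfl
            have hvi := i.isLt
            have hvj := j.isLt
            have hne : i.val ≠ j.val := Fin.val_ne_iff.mpr he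
            by_cases hi0 : i.val = 0
            · exact del_m2_disc hn1 hi0 (by omega) hm2 hconn
            · rw [Sym2.eq_swap] at hconn
              exact del_m2_disc hn1 (by omega) (by omega) hm2 hconn
        · rw [cbg_lr] at he
          exact del_bridge_disc he.1 he.2 hconn
        · rw [cbg_rl] at he
          rw [Sym2.eq_swap] at hconn
          exact del_bridge_disc he.2 he.1 hconn
        · rw [cbg_rr] at he
          have hvi := i.isLt
          have hvj := j.isLt
          have hne : i.val ≠ j.val := Fin.val_ne_iff.mpr he
          exact del_rr_not_cf (by omega) he hcf
end

section
/- Let Γ be the complete bridge graph B_{m,n} with m ≥ n ≥ 2. Then there exists a minimal prime graph Γ* on one more vertex than Γ, and a vertex α of Γ*, such that the induced subgraph of Γ* on all vertices other than α is isomorphic to Γ. -/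
open SimpleGraph

def notEnd {m n : ℕ} : (Fin m ⊕ Fin n) → Prop
  | Sum.inl i => i.val ≠ 0
  | Sum.inr j => j.val ≠ 0

def starAdj (m n : ℕ) : ((Fin m ⊕ Fin n) ⊕ Fin 1) → ((Fin m ⊕ Fin n) ⊕ Fin 1) → Prop
  | Sum.inl u, Sum.inl v => bridgeAdj m n u v
  | Sum.inl u, Sum.inr _ => notEnd u
  | Sum.inr _, Sum.inl v => notEnd v
  | Sum.inr _, Sum.inr _ => False

def starGraph (m n : ℕ) : SimpleGraph ((Fin m ⊕ Fin n) ⊕ Fin 1) where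
  Adj := starAdj m n
  symm := by
    constructor
    rintro ((a|a)|a) ((b|b)|b) h <;> simp_all [starAdj, bridgeAdj, notEnd] <;> tauto
  loopless := by
    constructor
    rintro ((a|a)|a) h <;> simp_all [starAdj, bridgeAdj, notEnd]

lemma star_cf (m n : ℕ) : (starGraph m n)ᶜ.CliqueFree 3 := by
  intro t ht
  rw [SimpleGraph.is3Clique_iff] at ht
  obtain ⟨a, b, c, hab, hac, hbc, -⟩ := ht
  rcases a with ((i|i)|i) <;> rcases b with ((j|j)|j) <;> rcases c with ((k|k)|k) <;>
    simp_all [SimpleGraph.compl_adj, _root_.starGraph, starAdj, bridgeAdj, notEnd, Fin.ext_iff] <;>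
    omega

lemma star_col (m n : ℕ) : (starGraph m n)ᶜ.Colorable 3 := by
  refine ⟨SimpleGraph.Coloring.mk
    (fun w => match w with
      | Sum.inl (Sum.inl _) => (0 : Fin 3)
      | Sum.inl (Sum.inr _) => 1
      | Sum.inr _ => 2) ?_⟩
  rintro ((i|i)|i) ((j|j)|j) h <;>
    simp_all [SimpleGraph.compl_adj, _root_.starGraph, starAdj, bridgeAdj, notEnd,
      Fin.fin_one_eq_zero] <;> decide

lemma star_conn {m n : ℕ} (h1 : 2 ≤ n) (h2 : n ≤ m) : (starGraph m n).Connected := by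
  have hm : 0 < m := by omega
  have hn : 0 < n := by omega
  have hm2 : 2 ≤ m := le_trans h1 h2
  set hub : (Fin m ⊕ Fin n) ⊕ Fin 1 := Sum.inl (Sum.inl ⟨0, hm⟩) with hhub
  have key : ∀ v, (starGraph m n).Reachable hub v := by
    rintro ((i|j)|t)
    · by_cases h : i = ⟨0, hm⟩
      · subst h; exact SimpleGraph.Reachable.refl _
      · exact SimpleGraph.Adj.reachable (by
          simpa [_root_.starGraph, starAdj, bridgeAdj] using Ne.symm h)
    · have step1 : (starGraph m n).Adj hub (Sum.inl (Sum.inr ⟨0, hn⟩)) := by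
        simp [_root_.starGraph, starAdj, bridgeAdj, hhub]
      by_cases h : j = ⟨0, hn⟩
      · subst h; exact step1.reachable
      · refine step1.reachable.trans (SimpleGraph.Adj.reachable ?_)
        simpa [_root_.starGraph, starAdj, bridgeAdj] using Ne.symm h
    · have step1 : (starGraph m n).Adj hub (Sum.inl (Sum.inl ⟨1, by omega⟩)) := by
        simp [_root_.starGraph, starAdj, bridgeAdj, Fin.ext_iff, hhub]
      refine step1.reachable.trans (SimpleGraph.Adj.reachable ?_)
      simp [_root_.starGraph, starAdj, notEnd]
  exact { preconnected := fun u v => (key u).symm.trans (key v), nonempty := ⟨hub⟩ }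

lemma not_cf_of_triangle {V : Type*} [DecidableEq V] {G : SimpleGraph V} {a b c : V}
    (h1 : G.Adj a b) (h2 : G.Adj a c) (h3 : G.Adj b c) : ¬ G.CliqueFree 3 :=
  fun h => h {a, b, c} (SimpleGraph.is3Clique_iff.mpr ⟨a, b, c, h1, h2, h3, rfl⟩)

lemma star_min {m n : ℕ} (h1 : 2 ≤ n) (h2 : n ≤ m) :
    ∀ e ∈ (starGraph m n).edgeSet,
      ¬ (((starGraph m n).deleteEdges {e})ᶜ.CliqueFree 3) := by
  have hm : 0 < m := by omega
  have hn : 0 < n := by omega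
  intro e he
  induction e using Sym2.ind with
  | _ a b =>
  rw [SimpleGraph.mem_edgeSet] at he
  rcases a with ((i|i)|i) <;> rcases b with ((j|j)|j)
  · -- clique edge in Fin m part
    exact not_cf_of_triangle (a := Sum.inl (Sum.inl i)) (b := Sum.inl (Sum.inl j))
      (c := Sum.inl (Sum.inr ⟨1, h1⟩))
      (by simp_all [SimpleGraph.compl_adj, SimpleGraph.deleteEdges_adj, _root_.starGraph, starAdj,
          bridgeAdj, notEnd, Sym2.eq_iff, Fin.ext_iff])
      (by simp_all [SimpleGraph.compl_adj, SimpleGraph.deleteEdges_adj, _root_.starGraph, starAdj,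
          bridgeAdj, notEnd, Sym2.eq_iff, Fin.ext_iff])
      (by simp_all [SimpleGraph.compl_adj, SimpleGraph.deleteEdges_adj, _root_.starGraph, starAdj,
          bridgeAdj, notEnd, Sym2.eq_iff, Fin.ext_iff])
  · -- bridge edge
    have hi : i.val = 0 := (he : _ ∧ _).1
    have hj : j.val = 0 := (he : _ ∧ _).2
    exact not_cf_of_triangle (a := Sum.inl (Sum.inl i)) (b := Sum.inl (Sum.inr j))
      (c := Sum.inr 0)
      (by simp_all [SimpleGraph.compl_adj, SimpleGraph.deleteEdges_adj, _root_.starGraph, starAdj,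
          bridgeAdj, notEnd, Sym2.eq_iff])
      (by simp_all [SimpleGraph.compl_adj, SimpleGraph.deleteEdges_adj, _root_.starGraph, starAdj,
          bridgeAdj, notEnd, Sym2.eq_iff])
      (by simp_all [SimpleGraph.compl_adj, SimpleGraph.deleteEdges_adj, _root_.starGraph, starAdj,
          bridgeAdj, notEnd, Sym2.eq_iff])
  · -- alpha edge to Fin m part (left end)
    have hi : i.val ≠ 0 := he
    exact not_cf_of_triangle (a := Sum.inl (Sum.inl i)) (b := Sum.inr j)
      (c := Sum.inl (Sum.inr ⟨0, hn⟩))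
      (by simp_all [SimpleGraph.compl_adj, SimpleGraph.deleteEdges_adj, _root_.starGraph, starAdj,
          bridgeAdj, notEnd, Sym2.eq_iff])
      (by simp_all [SimpleGraph.compl_adj, SimpleGraph.deleteEdges_adj, _root_.starGraph, starAdj,
          bridgeAdj, notEnd, Sym2.eq_iff])
      (by simp_all [SimpleGraph.compl_adj, SimpleGraph.deleteEdges_adj, _root_.starGraph, starAdj,
          bridgeAdj, notEnd, Sym2.eq_iff])
  · -- reverse bridge
    have hi : i.val = 0 := (he : _ ∧ _).1
    have hj : j.val = 0 := (he : _ ∧ _).2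
    exact not_cf_of_triangle (a := Sum.inl (Sum.inr i)) (b := Sum.inl (Sum.inl j))
      (c := Sum.inr 0)
      (by simp_all [SimpleGraph.compl_adj, SimpleGraph.deleteEdges_adj, _root_.starGraph, starAdj,
          bridgeAdj, notEnd, Sym2.eq_iff])
      (by simp_all [SimpleGraph.compl_adj, SimpleGraph.deleteEdges_adj, _root_.starGraph, starAdj,
          bridgeAdj, notEnd, Sym2.eq_iff])
      (by simp_all [SimpleGraph.compl_adj, SimpleGraph.deleteEdges_adj, _root_.starGraph, starAdj,
          bridgeAdj, notEnd, Sym2.eq_iff])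
  · -- clique edge in Fin n part
    exact not_cf_of_triangle (a := Sum.inl (Sum.inr i)) (b := Sum.inl (Sum.inr j))
      (c := Sum.inl (Sum.inl ⟨1, by omega⟩))
      (by simp_all [SimpleGraph.compl_adj, SimpleGraph.deleteEdges_adj, _root_.starGraph, starAdj,
          bridgeAdj, notEnd, Sym2.eq_iff, Fin.ext_iff])
      (by simp_all [SimpleGraph.compl_adj, SimpleGraph.deleteEdges_adj, _root_.starGraph, starAdj,
          bridgeAdj, notEnd, Sym2.eq_iff, Fin.ext_iff])
      (by simp_all [SimpleGraph.compl_adj, SimpleGraph.deleteEdges_adj, _root_.starGraph, starAdj,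
          bridgeAdj, notEnd, Sym2.eq_iff, Fin.ext_iff])
  · -- alpha edge to Fin n part (right end)
    have hi : i.val ≠ 0 := he
    exact not_cf_of_triangle (a := Sum.inl (Sum.inr i)) (b := Sum.inr j)
      (c := Sum.inl (Sum.inl ⟨0, hm⟩))
      (by simp_all [SimpleGraph.compl_adj, SimpleGraph.deleteEdges_adj, _root_.starGraph, starAdj,
          bridgeAdj, notEnd, Sym2.eq_iff])
      (by simp_all [SimpleGraph.compl_adj, SimpleGraph.deleteEdges_adj, _root_.starGraph, starAdj,
          bridgeAdj, notEnd, Sym2.eq_iff])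
      (by simp_all [SimpleGraph.compl_adj, SimpleGraph.deleteEdges_adj, _root_.starGraph, starAdj,
          bridgeAdj, notEnd, Sym2.eq_iff])
  · -- alpha to left part, a is alpha
    have hj : j.val ≠ 0 := he
    exact not_cf_of_triangle (a := Sum.inr i) (b := Sum.inl (Sum.inl j))
      (c := Sum.inl (Sum.inr ⟨0, hn⟩))
      (by simp_all [SimpleGraph.compl_adj, SimpleGraph.deleteEdges_adj, _root_.starGraph, starAdj,
          bridgeAdj, notEnd, Sym2.eq_iff])
      (by simp_all [SimpleGraph.compl_adj, SimpleGraph.deleteEdges_adj, _root_.starGraph, starAdj,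
          bridgeAdj, notEnd, Sym2.eq_iff])
      (by simp_all [SimpleGraph.compl_adj, SimpleGraph.deleteEdges_adj, _root_.starGraph, starAdj,
          bridgeAdj, notEnd, Sym2.eq_iff])
  · -- alpha to right part, a is alpha
    have hj : j.val ≠ 0 := he
    exact not_cf_of_triangle (a := Sum.inr i) (b := Sum.inl (Sum.inr j))
      (c := Sum.inl (Sum.inl ⟨0, hm⟩))
      (by simp_all [SimpleGraph.compl_adj, SimpleGraph.deleteEdges_adj, _root_.starGraph, starAdj,
          bridgeAdj, notEnd, Sym2.eq_iff])
      (by simp_all [SimpleGraph.compl_adj, SimpleGraph.deleteEdges_adj, _root_.starGraph, starAdj,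
          bridgeAdj, notEnd, Sym2.eq_iff])
      (by simp_all [SimpleGraph.compl_adj, SimpleGraph.deleteEdges_adj, _root_.starGraph, starAdj,
          bridgeAdj, notEnd, Sym2.eq_iff])
  · exact absurd he (by simp [_root_.starGraph, starAdj])

def comapIso {V W : Type*} (e : V ≃ W) (G : SimpleGraph W) : G.comap ⇑e ≃g G :=
  ⟨e, Iff.rfl⟩

lemma comap_compl {V W : Type*} (e : V ≃ W) (G : SimpleGraph W) :
    (G.comap ⇑e)ᶜ = Gᶜ.comap ⇑e := by
  ext x y
  simp [SimpleGraph.compl_adj, e.injective.ne_iff]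

lemma comap_deleteEdges {V W : Type*} (e : V ≃ W) (G : SimpleGraph W) (a b : V) :
    (G.comap ⇑e).deleteEdges {s(a, b)} = (G.deleteEdges {s(e a, e b)}).comap ⇑e := by
  ext x y
  simp only [SimpleGraph.deleteEdges_adj, SimpleGraph.comap_adj, Set.mem_singleton_iff,
    Sym2.eq_iff, e.apply_eq_iff_eq]

lemma isMPG_comap {V W : Type} [Fintype V] [Fintype W] (e : V ≃ W) (G : SimpleGraph W)
    (h : IsMPG G) : IsMPG (G.comap ⇑e) := by
  obtain ⟨hcard, hconn, hcf, hcol, hmin⟩ := h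
  refine ⟨?_, ?_, ?_, ?_, ?_⟩
  · rwa [Fintype.card_congr e]
  · exact (comapIso e G).connected_iff.mpr hconn
  · rw [comap_compl]
    exact hcf.comap (comapIso e Gᶜ).toEmbedding.isContained
  · rw [comap_compl]
    exact SimpleGraph.Colorable.of_hom (comapIso e Gᶜ).toEmbedding.toHom hcol
  · intro ed hed
    induction ed using Sym2.ind with
    | _ a b =>
    rw [SimpleGraph.mem_edgeSet] at hed
    have hed' : s(e a, e b) ∈ G.edgeSet := hed
    rintro ⟨hcf', hcol'⟩
    rw [comap_deleteEdges, comap_compl] at hcf' hcol'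
    refine hmin _ hed' ⟨?_, ?_⟩
    · exact hcf'.comap ((comapIso e (G.deleteEdges {s(e a, e b)})ᶜ).symm).toEmbedding.isContained
    · exact SimpleGraph.Colorable.of_hom
        ((comapIso e (G.deleteEdges {s(e a, e b)})ᶜ).symm).toEmbedding.toHom hcol'

def starEquiv (m n : ℕ) : ((Fin m ⊕ Fin n) ⊕ Fin 1) ≃ Fin (m + n + 1) :=
  (Equiv.sumCongr finSumFinEquiv (Equiv.refl (Fin 1))).trans finSumFinEquiv

/-- For `m ≥ n ≥ 2` there is a minimal prime graph `Γ*` on one more vertex than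
`B_{m,n}` and a vertex `α` of `Γ*` such that the induced subgraph of `Γ*` on the
remaining vertices is isomorphic to `B_{m,n}`. -/
theorem stmt3 (m n : ℕ) (h1 : 2 ≤ n) (h2 : n ≤ m) :
    ∃ Γstar : SimpleGraph (Fin (m + n + 1)), IsMPG Γstar ∧
      ∃ α : Fin (m + n + 1),
        Nonempty ((Γstar.induce {v | v ≠ α}) ≃g completeBridgeGraph m n) := by
  classical
  set ε := starEquiv m n with hε
  refine ⟨(starGraph m n).comap ⇑ε.symm, ?_, ε (Sum.inr 0), ⟨?_⟩⟩
  · exact isMPG_comap ε.symm (starGraph m n)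
      ⟨by simp [Fintype.card_sum]; omega, star_conn h1 h2, star_cf m n, star_col m n,
        fun e he hc => star_min h1 h2 e he hc.1⟩
  · -- the induced iso
    have hne : ∀ v : {v : Fin (m + n + 1) // v ∈ {v | v ≠ ε (Sum.inr 0)}},
        ∃ u : Fin m ⊕ Fin n, ε.symm v.1 = Sum.inl u := by
      rintro ⟨v, hv⟩
      rcases hw : ε.symm v with u | i
      · exact ⟨u, rfl⟩
      · exfalso
        apply hv
        have : v = ε (Sum.inr i) := by
          rw [← hw, Equiv.apply_symm_apply]
        rw [this, Subsingleton.elim i 0]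
    choose f hf using hne
    refine ⟨⟨f, fun u => ⟨ε (Sum.inl u), by simp [Set.mem_setOf_eq]⟩, ?_, ?_⟩, ?_⟩
    · rintro ⟨v, hv⟩
      have h := hf ⟨v, hv⟩
      apply Subtype.ext
      show ε (Sum.inl (f ⟨v, hv⟩)) = v
      rw [← h, Equiv.apply_symm_apply]
    · intro u
      have h := hf ⟨ε (Sum.inl u), by simp [Set.mem_setOf_eq]⟩
      rw [Equiv.symm_apply_apply] at h
      exact Sum.inl.inj h.symm
    · rintro ⟨v, hv⟩ ⟨w, hw⟩
      have h1' := hf ⟨v, hv⟩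
      have h2' := hf ⟨w, hw⟩
      show (completeBridgeGraph m n).Adj (f ⟨v, hv⟩) (f ⟨w, hw⟩) ↔
        (starGraph m n).Adj (ε.symm v) (ε.symm w)
      rw [h1', h2']
      exact Iff.rfl
end

section
/- If Γ is a minimally connected prime graph, then the diameter of Γ is at most 3. -/
open SimpleGraph

lemma dist_le_three_aux {V : Type} (Γ : SimpleGraph V) (hconn : Γ.Connected)
    (hfree : Γᶜ.CliqueFree 3) (u v : V) : Γ.dist u v ≤ 3 := by
  classical
  by_contra hgt
  push_neg at hgt
  obtain ⟨p, hp⟩ := (hconn u v).exists_walk_length_eq_dist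
  have h4 : 4 ≤ p.length := by omega
  have hpn : ¬ p.Nil := by
    rw [SimpleGraph.Walk.nil_iff_length_eq]; omega
  set q := p.tail with hq
  have hql : q.length + 1 = p.length := Walk.length_tail_add_one hpn
  have hqn : ¬ q.Nil := by rw [SimpleGraph.Walk.nil_iff_length_eq]; omega
  have hrl : q.tail.length + 1 = q.length := Walk.length_tail_add_one hqn
  have hcv_le : Γ.dist (q.getVert 1) v ≤ p.length - 2 := by
    have := Γ.dist_le q.tail
    change Γ.dist (q.getVert 1) v ≤ q.tail.length at this
    omega
  have huc_le : Γ.dist u (q.getVert 1) ≤ 2 := by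
    have h1 : Γ.Adj u (p.getVert 1) := Walk.adj_snd hpn
    have h2 : Γ.Adj (p.getVert 1) (q.getVert 1) := Walk.adj_snd hqn
    have := Γ.dist_le (Walk.cons h1 (Walk.cons h2 Walk.nil))
    simpa using this
  have htri := hconn.dist_triangle (u := u) (v := q.getVert 1) (w := v)
  have nadj : ∀ x y : V, 2 ≤ Γ.dist x y → Γᶜ.Adj x y := by
    intro x y hxy
    constructor
    · intro h; subst h; simp [SimpleGraph.dist_self] at hxy
    · intro h
      have : Γ.dist x y = 1 := dist_eq_one_iff_adj.mpr h
      omega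
  have h1 : Γᶜ.Adj u (q.getVert 1) := nadj _ _ (by omega)
  have h2 : Γᶜ.Adj u v := nadj _ _ (by omega)
  have h3 : Γᶜ.Adj (q.getVert 1) v := nadj _ _ (by omega)
  exact hfree {u, q.getVert 1, v} (is3Clique_triple_iff.mpr ⟨h1, h2, h3⟩)

/-- If `Γ` is a minimally connected prime graph, then its diameter is at most 3. -/
theorem stmt6 {V : Type} [Fintype V] (Γ : SimpleGraph V) (h : IsMCPG Γ) :
    Γ.diam ≤ 3 := by
  obtain ⟨hcard, hconn, hfree, -⟩ := h
  have hd : ∀ u v, Γ.edist u v ≤ 3 := by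
    intro u v
    have hne : Γ.edist u v ≠ ⊤ := edist_ne_top_iff_reachable.mpr (hconn u v)
    have he : Γ.edist u v = (Γ.dist u v : ℕ∞) := (ENat.coe_toNat hne).symm
    rw [he]
    exact_mod_cast dist_le_three_aux Γ hconn hfree u v
  have hed : Γ.ediam ≤ 3 := ediam_le_of_edist_le hd
  have := ENat.toNat_le_toNat hed (by simp)
  simpa [SimpleGraph.diam] using this
end

section
/- For m ≥ n ≥ 1, the number of Hamiltonian paths in the complete bridge graph B_{m,n}, where a path and its reverse are counted as the same path, is (m-1)!·(n-1)!. -/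
open SimpleGraph

namespace BridgeAux

/-! ### Generic walk/list correspondence -/

variable {V : Type} {G : SimpleGraph V}

def ltw (G : SimpleGraph V) : (x : V) → (l : List V) → List.Chain G.Adj x l → Σ b, G.Walk x b
  | x, [], _ => ⟨x, Walk.nil⟩
  | _, y :: l, h =>
    let w := ltw G y l (List.chain_cons.mp h).2
    ⟨w.1, Walk.cons (List.chain_cons.mp h).1 w.2⟩

lemma ltw_support (G : SimpleGraph V) : ∀ (x : V) (l : List V) (h : List.Chain G.Adj x l),
    (ltw G x l h).2.support = x :: l
  | x, [], _ => rfl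
  | x, y :: l, h => by
    rw [ltw]
    simp [Walk.support_cons, ltw_support G y l (List.chain_cons.mp h).2]

lemma walk_chain {a b : V} (p : G.Walk a b) : List.Chain G.Adj a p.support.tail := by
  have h := p.isChain_adj_support
  rwa [p.support_eq_cons] at h

lemma ltw_eq_aux {a c : V} (p : G.Walk a c) :
    ∀ (l : List V) (h : List.Chain G.Adj a l), a :: l = p.support → ltw G a l h = ⟨c, p⟩ := by
  induction p with
  | nil =>
    intro l h hl
    simp only [Walk.support_nil] at hl
    obtain rfl : l = [] := by injection hl
    rfl
  | @cons x y c h' q ih =>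
    intro l h hl
    rw [Walk.support_cons] at hl
    have hl' : l = q.support := by injection hl
    have hl2 : l = y :: q.support.tail := hl'.trans q.support_eq_cons
    subst hl2
    rw [ltw, ih q.support.tail (List.chain_cons.mp h).2 q.support_eq_cons.symm]

lemma support_inj (s t : Σ a b, G.Walk a b) (h : s.2.2.support = t.2.2.support) : s = t := by
  obtain ⟨a, b, p⟩ := s
  obtain ⟨a', b', q⟩ := t
  simp only at h
  obtain rfl : a = a' := by
    rw [p.support_eq_cons, q.support_eq_cons] at h
    injection h
  have h1 := ltw_eq_aux p p.support.tail (walk_chain p) p.support_eq_cons.symm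
  have h2 := ltw_eq_aux q p.support.tail (walk_chain p) (by rw [← p.support_eq_cons]; exact h)
  rw [h1] at h2
  simpa using h2

variable [DecidableEq V]

def HamEquiv (G : SimpleGraph V) (v₀ : V) :
    {x : Σ a b, G.Walk a b // x.2.2.IsHamiltonian} ≃
    {l : List V // l.Chain' G.Adj ∧ l.Nodup ∧ ∀ v, v ∈ l} where
  toFun p := ⟨p.val.2.2.support, p.val.2.2.isChain_adj_support, p.prop.isPath.support_nodup,
    fun v => p.prop.mem_support v⟩
  invFun l := by
    refine ⟨⟨l.val.head ?hne, (ltw G (l.val.head ?hne) l.val.tail ?hc).1,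
      (ltw G (l.val.head ?hne) l.val.tail ?hc).2⟩, ?_⟩
    case hne => exact List.ne_nil_of_mem (l.prop.2.2 v₀)
    case hc =>
      have h := l.prop.1
      rw [← List.cons_head_tail (List.ne_nil_of_mem (l.prop.2.2 v₀))] at h
      exact id h
    · refine Walk.IsPath.isHamiltonian_of_mem (Walk.IsPath.mk' ?_) ?_
      · rw [ltw_support, List.cons_head_tail]
        exact l.prop.2.1
      · intro v
        rw [ltw_support, List.cons_head_tail]
        exact l.prop.2.2 v
  left_inv p := by
    apply Subtype.ext
    apply support_inj
    simp only [ltw_support, List.cons_head_tail]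
  right_inv l := by
    apply Subtype.ext
    simp only [ltw_support, List.cons_head_tail]

lemma HamEquiv_rel (G : SimpleGraph V) (v₀ : V)
    (p q : {x : Σ a b, G.Walk a b // x.2.2.IsHamiltonian}) :
    (q.val = ⟨p.val.2.1, p.val.1, p.val.2.2.reverse⟩) ↔
      (HamEquiv G v₀ q).val = (HamEquiv G v₀ p).val.reverse := by
  constructor
  · intro h
    have := congrArg (fun s : Σ a b, G.Walk a b => s.2.2.support) h
    simpa [HamEquiv, Walk.support_reverse] using this
  · intro h
    apply support_inj
    simpa [HamEquiv, Walk.support_reverse] using h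

/-! ### Bridge-graph specifics -/

variable {m n : ℕ}

lemma adjLL {a b : Fin m} : (completeBridgeGraph m n).Adj (Sum.inl a) (Sum.inl b) ↔ a ≠ b := Iff.rfl
lemma adjRR {a b : Fin n} : (completeBridgeGraph m n).Adj (Sum.inr a) (Sum.inr b) ↔ a ≠ b := Iff.rfl
lemma adjLR {a : Fin m} {b : Fin n} :
    (completeBridgeGraph m n).Adj (Sum.inl a) (Sum.inr b) ↔ a.val = 0 ∧ b.val = 0 := Iff.rfl
lemma adjRL {a : Fin n} {b : Fin m} :
    (completeBridgeGraph m n).Adj (Sum.inr a) (Sum.inl b) ↔ a.val = 0 ∧ b.val = 0 := Iff.rfl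

def baseList (f : Equiv.Perm (Fin m)) (g : Equiv.Perm (Fin n)) : List (Fin m ⊕ Fin n) :=
  (List.ofFn fun i : Fin m => Sum.inl (f i.rev)) ++ (List.ofFn fun j : Fin n => Sum.inr (g j))

lemma ofFnL_ne_nil (hm : 0 < m) (f : Equiv.Perm (Fin m)) :
    (List.ofFn fun i : Fin m => Sum.inl (f i.rev) : List (Fin m ⊕ Fin n)) ≠ [] := by
  intro h
  have := congrArg List.length h
  simp at this
  omega

lemma ofFnR_ne_nil (hn : 0 < n) (g : Equiv.Perm (Fin n)) :
    (List.ofFn fun j : Fin n => Sum.inr (g j) : List (Fin m ⊕ Fin n)) ≠ [] := by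
  intro h
  have := congrArg List.length h
  simp at this
  omega

lemma chain'_baseList (hm : 0 < m) (hn : 0 < n) (f : Equiv.Perm (Fin m)) (g : Equiv.Perm (Fin n))
    (hf : f ⟨0, hm⟩ = ⟨0, hm⟩) (hg : g ⟨0, hn⟩ = ⟨0, hn⟩) :
    (baseList f g).Chain' (completeBridgeGraph m n).Adj := by
  rw [baseList, List.Chain', List.isChain_append]
  refine ⟨?_, ?_, ?_⟩
  · rw [List.isChain_iff_getElem]
    intro i hi
    simp only [List.getElem_ofFn]
    rw [adjLL]
    intro hEq
    have := Fin.rev_injective (f.injective hEq)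
    simp [Fin.ext_iff] at this
  · rw [List.isChain_iff_getElem]
    intro i hi
    simp only [List.getElem_ofFn]
    rw [adjRR]
    intro hEq
    have := g.injective hEq
    simp [Fin.ext_iff] at this
  · intro x hx y hy
    rw [List.getLast?_eq_getLast (ofFnL_ne_nil hm f), Option.mem_some_iff] at hx
    rw [List.head?_eq_head (ofFnR_ne_nil hn g), Option.mem_some_iff] at hy
    subst hx; subst hy
    rw [List.getLast_ofFn, List.head_ofFn, adjLR]
    constructor
    · have h1 : (⟨m - 1, by omega⟩ : Fin m).rev = ⟨0, hm⟩ := by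
        simp [Fin.rev, Fin.ext_iff]; omega
      rw [h1, hf]
    · have h2 : (⟨0, by simpa using hn⟩ : Fin n) = ⟨0, hn⟩ := rfl
      rw [h2, hg]

lemma nodup_baseList (f : Equiv.Perm (Fin m)) (g : Equiv.Perm (Fin n)) :
    (baseList f g).Nodup := by
  rw [baseList, List.nodup_append]
  refine ⟨?_, ?_, ?_⟩
  · rw [List.nodup_ofFn]
    intro i j hij
    simp only [Sum.inl.injEq] at hij
    exact Fin.rev_injective (f.injective hij)
  · rw [List.nodup_ofFn]
    intro i j hij
    simp only [Sum.inr.injEq] at hij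
    exact g.injective hij
  · intro x hx y hy
    rw [List.mem_ofFn] at hx hy
    obtain ⟨i, rfl⟩ := hx
    obtain ⟨j, rfl⟩ := hy
    simp

lemma mem_baseList (f : Equiv.Perm (Fin m)) (g : Equiv.Perm (Fin n)) (v : Fin m ⊕ Fin n) :
    v ∈ baseList f g := by
  rw [baseList, List.mem_append]
  cases v with
  | inl a =>
    left
    rw [List.mem_ofFn]
    exact ⟨(f.symm a).rev, by simp⟩
  | inr a =>
    right
    rw [List.mem_ofFn]
    exact ⟨g.symm a, by simp⟩

lemma baseList_inj {f f' : Equiv.Perm (Fin m)} {g g' : Equiv.Perm (Fin n)}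
    (h : baseList f g = baseList f' g') : f = f' ∧ g = g' := by
  rw [baseList, baseList] at h
  obtain ⟨h1, h2⟩ := List.append_inj h (by simp)
  have h1' := List.ofFn_injective h1
  have h2' := List.ofFn_injective h2
  refine ⟨Equiv.ext fun a => ?_, Equiv.ext fun a => ?_⟩
  · have := congrFun h1' a.rev
    simpa [Fin.rev_rev] using this
  · have := congrFun h2' a
    simpa using this

lemma baseList_ne_nil (hm : 0 < m) (f : Equiv.Perm (Fin m)) (g : Equiv.Perm (Fin n)) :
    baseList f g ≠ [] := by
  rw [baseList]
  simp only [ne_eq, List.append_eq_nil_iff, not_and]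
  intro h
  exact absurd h (ofFnL_ne_nil hm f)

lemma head?_baseList (hm : 0 < m) (f : Equiv.Perm (Fin m)) (g : Equiv.Perm (Fin n)) :
    (baseList f g).head? = some (Sum.inl (f (⟨0, hm⟩ : Fin m).rev)) := by
  rw [baseList, List.head?_append_of_ne_nil _ (ofFnL_ne_nil hm f),
    List.head?_eq_head (ofFnL_ne_nil hm f), List.head_ofFn]

lemma getLast?_baseList (hm : 0 < m) (hn : 0 < n) (f : Equiv.Perm (Fin m))
    (g : Equiv.Perm (Fin n)) :
    (baseList f g).getLast? = some (Sum.inr (g ⟨n - 1, by omega⟩)) := by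
  rw [baseList, List.getLast?_eq_getLast
      (fun h => ofFnL_ne_nil hm f (List.append_eq_nil_iff.mp h).1),
    List.getLast_append_of_ne_nil _ (ofFnR_ne_nil hn g), List.getLast_ofFn]

lemma mono : ∀ (l : List (Fin m ⊕ Fin n)), l.Chain' (completeBridgeGraph m n).Adj → l.Nodup →
    ∃ A B : List (Fin m ⊕ Fin n), (∀ x ∈ A, x.isLeft = true) ∧ (∀ x ∈ B, x.isRight = true) ∧
      (l = A ++ B ∨ l = B ++ A) := by
  intro l
  induction l with
  | nil => exact fun _ _ => ⟨[], [], by simp, by simp, Or.inl rfl⟩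
  | cons v t ih =>
    intro hc hd
    obtain ⟨A, B, hA, hB, hcase⟩ := ih hc.tail (List.Nodup.of_cons hd)
    rcases hcase with rfl | rfl
    · -- t = A ++ B
      cases v with
      | inl a =>
        exact ⟨Sum.inl a :: A, B, by
          intro x hx
          rcases List.mem_cons.mp hx with rfl | hx
          · rfl
          · exact hA x hx, hB, Or.inl rfl⟩
      | inr a =>
        match A, hA with
        | [], _ =>
          refine ⟨[], Sum.inr a :: B, by simp, ?_, Or.inr (by simp)⟩
          intro x hx
          rcases List.mem_cons.mp hx with rfl | hx
          · rfl
          · exact hB x hx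
        | x :: A', hA =>
          obtain ⟨c, rfl⟩ := Sum.isLeft_iff.mp (hA x List.mem_cons_self)
          have hadj : (completeBridgeGraph m n).Adj (Sum.inr a) (Sum.inl c) :=
            (List.isChain_cons_cons.mp hc).1
          obtain ⟨ha0, hc0⟩ := adjRL.mp hadj
          match B, hB with
          | [], _ =>
            refine ⟨Sum.inl c :: A', [Sum.inr a], hA, by simp, Or.inr (by simp)⟩
          | y :: B', hB =>
            exfalso
            -- junction: last of (inl c :: A') is adjacent to y
            have hch : ((Sum.inl c :: A') ++ (y :: B')).Chain' (completeBridgeGraph m n).Adj :=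
              hc.tail
            obtain ⟨-, -, hj⟩ := List.isChain_append.mp hch
            have hlast := hj ((Sum.inl c :: A').getLast (List.cons_ne_nil _ _))
              (by rw [List.getLast?_eq_getLast (List.cons_ne_nil _ _)]; rfl) y rfl
            obtain ⟨d, hd'⟩ := Sum.isLeft_iff.mp
              (hA _ (List.getLast_mem (List.cons_ne_nil _ _)))
            obtain ⟨e, rfl⟩ := Sum.isRight_iff.mp (hB y List.mem_cons_self)
            rw [hd'] at hlast
            obtain ⟨-, he0⟩ := adjLR.mp hlast
            have hvy : (Sum.inr a : Fin m ⊕ Fin n) = Sum.inr e := by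
              congr 1
              exact Fin.ext (ha0.trans he0.symm)
            have : (Sum.inr a : Fin m ⊕ Fin n) ∈ (Sum.inl c :: A') ++ (Sum.inr e :: B') := by
              rw [hvy]
              simp
            exact (List.nodup_cons.mp hd).1 this
    · -- t = B ++ A
      cases v with
      | inr a =>
        exact ⟨A, Sum.inr a :: B, hA, by
          intro x hx
          rcases List.mem_cons.mp hx with rfl | hx
          · rfl
          · exact hB x hx, Or.inr rfl⟩
      | inl a =>
        match B, hB with
        | [], _ =>
          refine ⟨Sum.inl a :: A, [], ?_, by simp, Or.inl (by simp)⟩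
          intro x hx
          rcases List.mem_cons.mp hx with rfl | hx
          · rfl
          · exact hA x hx
        | x :: B', hB =>
          obtain ⟨c, rfl⟩ := Sum.isRight_iff.mp (hB x List.mem_cons_self)
          have hadj : (completeBridgeGraph m n).Adj (Sum.inl a) (Sum.inr c) :=
            (List.isChain_cons_cons.mp hc).1
          obtain ⟨ha0, hc0⟩ := adjLR.mp hadj
          match A, hA with
          | [], _ =>
            refine ⟨[Sum.inl a], Sum.inr c :: B', by simp, hB, Or.inl (by simp)⟩
          | y :: A', hA =>
            exfalso
            have hch : ((Sum.inr c :: B') ++ (y :: A')).Chain' (completeBridgeGraph m n).Adj :=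
              hc.tail
            obtain ⟨-, -, hj⟩ := List.isChain_append.mp hch
            have hlast := hj ((Sum.inr c :: B').getLast (List.cons_ne_nil _ _))
              (by rw [List.getLast?_eq_getLast (List.cons_ne_nil _ _)]; rfl) y rfl
            obtain ⟨d, hd'⟩ := Sum.isRight_iff.mp
              (hB _ (List.getLast_mem (List.cons_ne_nil _ _)))
            obtain ⟨e, rfl⟩ := Sum.isLeft_iff.mp (hA y List.mem_cons_self)
            rw [hd'] at hlast
            obtain ⟨-, he0⟩ := adjRL.mp hlast
            have hvy : (Sum.inl a : Fin m ⊕ Fin n) = Sum.inl e := by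
              congr 1
              exact Fin.ext (ha0.trans he0.symm)
            have : (Sum.inl a : Fin m ⊕ Fin n) ∈ (Sum.inr c :: B') ++ (Sum.inl e :: A') := by
              rw [hvy]
              simp
            exact (List.nodup_cons.mp hd).1 this


lemma list_perm {k : ℕ} (L : List (Fin k)) (hnd : L.Nodup) (hall : ∀ a, a ∈ L) :
    ∃ e : Equiv.Perm (Fin k), L = List.ofFn e := by
  have hlen : L.length = k := by
    rw [← List.toFinset_card_of_nodup hnd]
    rw [show L.toFinset = Finset.univ from Finset.eq_univ_iff_forall.mpr
      (fun a => List.mem_toFinset.mpr (hall a))]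
    simp
  have hinj : Function.Injective (fun i : Fin k => L.get (Fin.cast hlen.symm i)) := by
    intro i j hij
    have := List.nodup_iff_injective_get.mp hnd hij
    exact Fin.cast_injective _ this
  refine ⟨Equiv.ofBijective _ (Finite.injective_iff_bijective.mp hinj), ?_⟩
  apply List.ext_get (by simp [hlen])
  intro i h1 h2
  rw [List.get_ofFn]
  show L.get _ = L.get _
  congr 1

lemma shape_left (hm : 0 < m) (hn : 0 < n) (A B : List (Fin m ⊕ Fin n))
    (hA : ∀ x ∈ A, x.isLeft = true) (hB : ∀ x ∈ B, x.isRight = true)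
    (hc : (A ++ B).Chain' (completeBridgeGraph m n).Adj) (hnd : (A ++ B).Nodup)
    (hall : ∀ v, v ∈ A ++ B) :
    ∃ (f : Equiv.Perm (Fin m)) (g : Equiv.Perm (Fin n)) (_ : f ⟨0, hm⟩ = ⟨0, hm⟩)
      (_ : g ⟨0, hn⟩ = ⟨0, hn⟩), A ++ B = baseList f g := by
  classical
  set toL : Fin m ⊕ Fin n → Fin m := Sum.elim id (fun _ => ⟨0, hm⟩) with htoL
  set toR : Fin m ⊕ Fin n → Fin n := Sum.elim (fun _ => ⟨0, hn⟩) id with htoR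
  have hA₀ : (A.map toL).map Sum.inl = A := by
    rw [List.map_map]
    have h : ∀ x ∈ A, (Sum.inl ∘ toL) x = id x := by
      intro x hx
      obtain ⟨c, rfl⟩ := Sum.isLeft_iff.mp (hA x hx)
      rfl
    rw [List.map_congr_left h, List.map_id]
  have hB₀ : (B.map toR).map Sum.inr = B := by
    rw [List.map_map]
    have h : ∀ x ∈ B, (Sum.inr ∘ toR) x = id x := by
      intro x hx
      obtain ⟨c, rfl⟩ := Sum.isRight_iff.mp (hB x hx)
      rfl
    rw [List.map_congr_left h, List.map_id]
  obtain ⟨ndA, ndB, hdisj⟩ := List.nodup_append.mp hnd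
  have ndA₀ : (A.map toL).Nodup := by
    apply List.Nodup.of_map Sum.inl
    rw [hA₀]; exact ndA
  have ndB₀ : (B.map toR).Nodup := by
    apply List.Nodup.of_map Sum.inr
    rw [hB₀]; exact ndB
  have allA₀ : ∀ a : Fin m, a ∈ A.map toL := by
    intro a
    have hmem := hall (Sum.inl a)
    rw [List.mem_append] at hmem
    rcases hmem with hmem | hmem
    · rw [← hA₀, List.mem_map] at hmem
      obtain ⟨b, hb, hb2⟩ := hmem
      rwa [show b = a from Sum.inl_injective hb2] at hb
    · have := hB _ hmem
      simp at this
  have allB₀ : ∀ a : Fin n, a ∈ B.map toR := by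
    intro a
    have hmem := hall (Sum.inr a)
    rw [List.mem_append] at hmem
    rcases hmem with hmem | hmem
    · have := hA _ hmem
      simp at this
    · rw [← hB₀, List.mem_map] at hmem
      obtain ⟨b, hb, hb2⟩ := hmem
      rwa [show b = a from Sum.inr_injective hb2] at hb
  obtain ⟨e₁, he₁⟩ := list_perm (A.map toL) ndA₀ allA₀
  obtain ⟨e₂, he₂⟩ := list_perm (B.map toR) ndB₀ allB₀
  have hAe : A = List.ofFn (fun i => Sum.inl (e₁ i)) := by
    rw [← hA₀, he₁, List.map_ofFn]
    rfl
  have hBe : B = List.ofFn (fun j => Sum.inr (e₂ j)) := by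
    rw [← hB₀, he₂, List.map_ofFn]
    rfl
  have hAne : A ≠ [] := by
    intro h
    have := allA₀ ⟨0, hm⟩
    rw [h] at this
    simp at this
  have hBne : B ≠ [] := by
    intro h
    have := allB₀ ⟨0, hn⟩
    rw [h] at this
    simp at this
  obtain ⟨-, -, hj⟩ := List.isChain_append.mp hc
  have hofL : (List.ofFn fun i => Sum.inl (e₁ i) : List (Fin m ⊕ Fin n)) ≠ [] := by
    intro h
    have := congrArg List.length h
    simp at this
    omega
  have hofR : (List.ofFn fun j => Sum.inr (e₂ j) : List (Fin m ⊕ Fin n)) ≠ [] := by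
    intro h
    have := congrArg List.length h
    simp at this
    omega
  have h1 : A.getLast? = some (Sum.inl (e₁ ⟨m - 1, by omega⟩)) := by
    rw [hAe, List.getLast?_eq_getLast hofL, List.getLast_ofFn]
  have h2 : B.head? = some (Sum.inr (e₂ ⟨0, hn⟩)) := by
    rw [hBe, List.head?_eq_head hofR, List.head_ofFn]
  have hjadj := hj (Sum.inl (e₁ ⟨m - 1, by omega⟩)) (by rw [h1]; rfl)
    (Sum.inr (e₂ ⟨0, hn⟩)) (by rw [h2]; rfl)
  rw [adjLR] at hjadj
  obtain ⟨h10, h20⟩ := hjadj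
  refine ⟨Fin.revPerm.trans e₁, e₂, ?_, Fin.ext h20, ?_⟩
  · show e₁ (Fin.rev ⟨0, hm⟩) = ⟨0, hm⟩
    rw [show Fin.rev (⟨0, hm⟩ : Fin m) = ⟨m - 1, by omega⟩ from Fin.ext (by simp [Fin.rev])]
    exact Fin.ext h10
  · rw [baseList, hAe, hBe]
    congr 1
    apply congrArg List.ofFn
    funext i
    show Sum.inl (e₁ i) = Sum.inl (e₁ i.rev.rev)
    rw [Fin.rev_rev]

lemma shape (hm : 0 < m) (hn : 0 < n) (l : List (Fin m ⊕ Fin n))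
    (hc : l.Chain' (completeBridgeGraph m n).Adj) (hnd : l.Nodup) (hall : ∀ v, v ∈ l) :
    ∃ (f : Equiv.Perm (Fin m)) (g : Equiv.Perm (Fin n)) (_ : f ⟨0, hm⟩ = ⟨0, hm⟩)
      (_ : g ⟨0, hn⟩ = ⟨0, hn⟩), l = baseList f g ∨ l = (baseList f g).reverse := by
  obtain ⟨A, B, hA, hB, hcase⟩ := mono l hc hnd
  rcases hcase with rfl | rfl
  · obtain ⟨f, g, hf, hg, he⟩ := shape_left hm hn A B hA hB hc hnd hall
    exact ⟨f, g, hf, hg, Or.inl he⟩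
  · have hrc : ((B ++ A).reverse).Chain' (completeBridgeGraph m n).Adj :=
      List.isChain_reverse.mpr (hc.imp fun a b h => h.symm)
    rw [List.reverse_append] at hrc
    obtain ⟨f, g, hf, hg, he⟩ := shape_left hm hn A.reverse B.reverse
      (fun x hx => hA x (List.mem_reverse.mp hx)) (fun x hx => hB x (List.mem_reverse.mp hx))
      hrc (by rw [← List.reverse_append]; exact List.nodup_reverse.mpr hnd)
      (fun v => by rw [← List.reverse_append, List.mem_reverse]; exact hall v)
    refine ⟨f, g, hf, hg, Or.inr ?_⟩
    have h2 := congrArg List.reverse he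
    rw [← List.reverse_append, List.reverse_reverse] at h2
    exact h2

def LTy (m n : ℕ) : Type :=
  {l : List (Fin m ⊕ Fin n) //
    l.Chain' (completeBridgeGraph m n).Adj ∧ l.Nodup ∧ ∀ v, v ∈ l}

def PTy (m n : ℕ) (hm : 0 < m) (hn : 0 < n) : Type :=
  {f : Equiv.Perm (Fin m) // f ⟨0, hm⟩ = ⟨0, hm⟩} ×
    {g : Equiv.Perm (Fin n) // g ⟨0, hn⟩ = ⟨0, hn⟩}

def Phi (hm : 0 < m) (hn : 0 < n) : Bool × PTy m n hm hn → LTy m n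
  | (true, p) => ⟨baseList p.1.val p.2.val,
      chain'_baseList hm hn _ _ p.1.prop p.2.prop, nodup_baseList _ _, mem_baseList _ _⟩
  | (false, p) => ⟨(baseList p.1.val p.2.val).reverse,
      List.isChain_reverse.mpr
        ((chain'_baseList hm hn _ _ p.1.prop p.2.prop).imp fun a b h => h.symm),
      List.nodup_reverse.mpr (nodup_baseList _ _),
      fun v => List.mem_reverse.mpr (mem_baseList _ _ v)⟩

lemma Phi_rev (hm : 0 < m) (hn : 0 < n) (b : Bool) (p : PTy m n hm hn) :
    (Phi hm hn (!b, p)).val = (Phi hm hn (b, p)).val.reverse := by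
  cases b
  · show (baseList p.1.val p.2.val) = (baseList p.1.val p.2.val).reverse.reverse
    rw [List.reverse_reverse]
  · rfl

lemma Phi_inj (hm : 0 < m) (hn : 0 < n) : Function.Injective (Phi hm hn) := by
  rintro ⟨b, p⟩ ⟨b', p'⟩ h
  have hv := congrArg Subtype.val h
  have hpp : ∀ (hb : baseList p.1.val p.2.val = baseList p'.1.val p'.2.val), p = p' := by
    intro hb
    obtain ⟨hf, hg⟩ := baseList_inj hb
    exact Prod.ext (Subtype.ext hf) (Subtype.ext hg)
  match b, b' with
  | true, true =>
    rw [show (Phi hm hn (true, p)).val = baseList p.1.val p.2.val from rfl,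
      show (Phi hm hn (true, p')).val = baseList p'.1.val p'.2.val from rfl] at hv
    rw [hpp hv]
  | false, false =>
    rw [show (Phi hm hn (false, p)).val = (baseList p.1.val p.2.val).reverse from rfl,
      show (Phi hm hn (false, p')).val = (baseList p'.1.val p'.2.val).reverse from rfl] at hv
    rw [hpp (List.reverse_injective hv)]
  | true, false =>
    exfalso
    have hh := congrArg List.head? hv
    rw [show (Phi hm hn (true, p)).val = baseList p.1.val p.2.val from rfl,
      show (Phi hm hn (false, p')).val = (baseList p'.1.val p'.2.val).reverse from rfl] at hh
    rw [head?_baseList hm, List.head?_reverse, getLast?_baseList hm hn] at hh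
    simp at hh
  | false, true =>
    exfalso
    have hh := congrArg List.head? hv
    rw [show (Phi hm hn (true, p')).val = baseList p'.1.val p'.2.val from rfl,
      show (Phi hm hn (false, p)).val = (baseList p.1.val p.2.val).reverse from rfl] at hh
    rw [head?_baseList hm, List.head?_reverse, getLast?_baseList hm hn] at hh
    simp at hh

lemma Phi_surj (hm : 0 < m) (hn : 0 < n) : Function.Surjective (Phi hm hn) := by
  rintro ⟨l, hc, hnd, hall⟩
  obtain ⟨f, g, hf, hg, hcase⟩ := shape hm hn l hc hnd hall
  rcases hcase with rfl | rfl
  · exact ⟨(true, ⟨f, hf⟩, ⟨g, hg⟩), rfl⟩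
  · exact ⟨(false, ⟨f, hf⟩, ⟨g, hg⟩), rfl⟩

noncomputable def PhiEquiv (hm : 0 < m) (hn : 0 < n) : Bool × PTy m n hm hn ≃ LTy m n :=
  Equiv.ofBijective (Phi hm hn) ⟨Phi_inj hm hn, Phi_surj hm hn⟩

def quotBool {α : Type} : Quot (fun x y : Bool × α => y = (!x.1, x.2)) ≃ α where
  toFun := Quot.lift (fun x => x.2) (by rintro x y rfl; rfl)
  invFun a := Quot.mk _ (true, a)
  left_inv := by
    apply Quot.ind
    rintro ⟨b, a⟩
    cases b
    · exact Quot.sound rfl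
    · rfl
  right_inv a := rfl

lemma card_psub (k : ℕ) (hk : 0 < k) :
    Nat.card {f : Equiv.Perm (Fin k) // f ⟨0, hk⟩ = ⟨0, hk⟩} = Nat.factorial (k - 1) := by
  obtain ⟨j, rfl⟩ : ∃ j, k = j + 1 := ⟨k - 1, by omega⟩
  have hzero : (⟨0, hk⟩ : Fin (j + 1)) = 0 := by
    ext
    simp
  have E : {f : Equiv.Perm (Fin (j + 1)) // f ⟨0, hk⟩ = ⟨0, hk⟩} ≃ Equiv.Perm (Fin j) := by
    refine ⟨fun f => (Equiv.Perm.decomposeFin f.val).2,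
      fun e => ⟨Equiv.Perm.decomposeFin.symm (0, e), by
        rw [hzero]
        exact Equiv.Perm.decomposeFin_symm_apply_zero 0 e⟩, ?_, ?_⟩
    · rintro ⟨f, hf⟩
      apply Subtype.ext
      have hfx : f = Equiv.Perm.decomposeFin.symm (Equiv.Perm.decomposeFin f) :=
        (Equiv.symm_apply_apply _ _).symm
      have h1 : (Equiv.Perm.decomposeFin f).1 = 0 := by
        conv_lhs => rw [show (Equiv.Perm.decomposeFin f).1 =
          Equiv.Perm.decomposeFin.symm (Equiv.Perm.decomposeFin f) 0 from
            (Equiv.Perm.decomposeFin_symm_apply_zero _ _).symm]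
        rw [← hfx, ← hzero, hf, hzero]
      show Equiv.Perm.decomposeFin.symm (0, (Equiv.Perm.decomposeFin f).2) = f
      conv_rhs => rw [hfx]
      rw [← h1]
    · intro e
      show (Equiv.Perm.decomposeFin (Equiv.Perm.decomposeFin.symm (0, e))).2 = e
      rw [Equiv.apply_symm_apply]
  rw [Nat.card_congr E, Nat.card_eq_fintype_card, Fintype.card_perm, Fintype.card_fin]
  simp

end BridgeAux

/-- For `m ≥ n ≥ 1`, the number of Hamiltonian paths in `B_{m,n}`, identifying each path
with its reverse, is `(m-1)! * (n-1)!`. -/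
theorem stmt10 (m n : ℕ) (h1 : 1 ≤ n) (h2 : n ≤ m) :
    Nat.card (Quot (fun
        (p q : {x : Σ a b : Fin m ⊕ Fin n, (completeBridgeGraph m n).Walk a b //
          x.2.2.IsHamiltonian}) =>
      q.val = ⟨p.val.2.1, p.val.1, p.val.2.2.reverse⟩)) =
    Nat.factorial (m - 1) * Nat.factorial (n - 1) := by
  have hm : 0 < m := by omega
  have hn : 0 < n := h1
  rw [← BridgeAux.card_psub m hm, ← BridgeAux.card_psub n hn, ← Nat.card_prod]
  apply Nat.card_congr
  have e1 := Quot.congr (BridgeAux.HamEquiv (completeBridgeGraph m n) (Sum.inl ⟨0, hm⟩))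
    (rb := fun l l' => l'.val = l.val.reverse)
    (fun p q => BridgeAux.HamEquiv_rel (completeBridgeGraph m n) (Sum.inl ⟨0, hm⟩) p q)
  refine e1.trans ?_
  have e2 := (Quot.congr (BridgeAux.PhiEquiv hm hn)
    (ra := fun x y : Bool × BridgeAux.PTy m n hm hn => y = (!x.1, x.2))
    (rb := fun (l l' : BridgeAux.LTy m n) => l'.val = l.val.reverse) ?_).symm
  · refine e2.trans ?_
    exact BridgeAux.quotBool
  · rintro ⟨b, p⟩ ⟨b', p'⟩
    constructor
    · intro hbp
      show ((BridgeAux.PhiEquiv hm hn) (b', p')).val = ((BridgeAux.PhiEquiv hm hn) (b, p)).val.reverse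
      rw [show ((b', p') : Bool × BridgeAux.PTy m n hm hn) = (!b, p) from hbp]
      exact BridgeAux.Phi_rev hm hn b p
    · intro h
      show (b', p') = (!b, p)
      have : BridgeAux.PhiEquiv hm hn (b', p') = BridgeAux.PhiEquiv hm hn (!b, p) := by
        apply Subtype.ext
        rw [show ((BridgeAux.PhiEquiv hm hn) (b', p')).val = (BridgeAux.Phi hm hn (b', p')).val
          from rfl]
        rw [show ((BridgeAux.PhiEquiv hm hn) (!b, p)) = (BridgeAux.Phi hm hn (!b, p)) from rfl]
        rw [BridgeAux.Phi_rev hm hn b p]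
        exact h
      exact (BridgeAux.PhiEquiv hm hn).injective this
end

section
/- Every minimal prime graph is Hamiltonian, i.e., contains a cycle passing through every vertex exactly once. -/
open SimpleGraph

section MPGHamAux

open SimpleGraph List

set_option linter.unusedSectionVars false
set_option maxHeartbeats 1000000

variable {V : Type} [Fintype V] [DecidableEq V] {Γ : SimpleGraph V}

/-- independence number ≤ 2 -/
lemma mpg_no_indep3 (hcf : Γᶜ.CliqueFree 3) {x y z : V} (hxy : x ≠ y) (hxz : x ≠ z) (hyz : y ≠ z)
    (h1 : ¬Γ.Adj x y) (h2 : ¬Γ.Adj x z) (h3 : ¬Γ.Adj y z) : False := by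
  refine hcf {x, y, z} ?_
  rw [is3Clique_iff]
  exact ⟨x, y, z, (Γ.compl_adj x y).2 ⟨hxy, h1⟩, (Γ.compl_adj x z).2 ⟨hxz, h2⟩,
    (Γ.compl_adj y z).2 ⟨hyz, h3⟩, rfl⟩

/-- key minimality lemma: an MPG is never the union of two cliques with a crossing edge -/
lemma mpg_bip (h : IsMPG Γ) {L : Set V} (hL : ∀ x ∈ L, ∀ y ∈ L, x ≠ y → Γ.Adj x y)
    (hLc : ∀ x ∉ L, ∀ y ∉ L, x ≠ y → Γ.Adj x y) {x y : V} (hx : x ∈ L) (hy : y ∉ L)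
    (hadj : Γ.Adj x y) : False := by
  classical
  have he : s(x, y) ∈ Γ.edgeSet := hadj
  refine h.2.2.2.2 _ he ⟨?_, ?_⟩
  · -- CliqueFree 3
    have key : ∀ a b : V, (Γ.deleteEdges {s(x,y)})ᶜ.Adj a b → ((a ∈ L ∧ b ∉ L) ∨ (a ∉ L ∧ b ∈ L)) := by
      intro a b hab
      rw [compl_adj, deleteEdges_adj] at hab
      obtain ⟨hne, hnadj⟩ := hab
      by_cases haL : a ∈ L <;> by_cases hbL : b ∈ L
      · exfalso; apply hnadj
        refine ⟨hL a haL b hbL hne, ?_⟩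
        simp only [Set.mem_singleton_iff, Sym2.eq_iff]
        rintro (⟨rfl, rfl⟩ | ⟨rfl, rfl⟩) <;> [exact hy hbL; exact hy haL]
      · exact Or.inl ⟨haL, hbL⟩
      · exact Or.inr ⟨haL, hbL⟩
      · exfalso; apply hnadj
        refine ⟨hLc a haL b hbL hne, ?_⟩
        simp only [Set.mem_singleton_iff, Sym2.eq_iff]
        rintro (⟨rfl, rfl⟩ | ⟨rfl, rfl⟩) <;> [exact haL hx; exact hbL hx]
    intro s hs
    rw [is3Clique_iff] at hs
    obtain ⟨a, b, c, hab, hac, hbc, rfl⟩ := hs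
    rcases key a b hab with ⟨h1, h2⟩ | ⟨h1, h2⟩ <;>
      rcases key a c hac with ⟨h3, h4⟩ | ⟨h3, h4⟩ <;>
      rcases key b c hbc with ⟨h5, h6⟩ | ⟨h5, h6⟩ <;> tauto
  · -- Colorable 3
    refine ⟨Coloring.mk (fun v => if v ∈ L then (0 : Fin 3) else 1) ?_⟩
    intro a b hab
    rw [compl_adj, deleteEdges_adj] at hab
    obtain ⟨hne, hnadj⟩ := hab
    by_cases haL : a ∈ L <;> by_cases hbL : b ∈ L <;> simp [haL, hbL]
    · exact hnadj ⟨hL a haL b hbL hne, by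
        simp only [Set.mem_singleton_iff, Sym2.eq_iff]
        rintro (⟨rfl, rfl⟩ | ⟨rfl, rfl⟩) <;> [exact hy hbL; exact hy haL]⟩
    · exact hnadj ⟨hLc a haL b hbL hne, by
        simp only [Set.mem_singleton_iff, Sym2.eq_iff]
        rintro (⟨rfl, rfl⟩ | ⟨rfl, rfl⟩) <;> [exact haL hx; exact hbL hx]⟩

/-- connectivity gives an edge across any cut -/
lemma walk_cross {S : Set V} {a b : V} (w : Γ.Walk a b) : a ∈ S → b ∉ S →
    ∃ x ∈ S, ∃ y, y ∉ S ∧ Γ.Adj x y := by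
  induction w with
  | nil => exact fun ha hb => absurd ha hb
  | @cons a c b hac p ih =>
    intro ha hb
    by_cases hc : c ∈ S
    · exact ih hc hb
    · exact ⟨a, ha, c, hc, hac⟩

lemma mpg_cross (hconn : Γ.Connected) {S : Set V} {a b : V} (ha : a ∈ S) (hb : b ∉ S) :
    ∃ x ∈ S, ∃ y, y ∉ S ∧ Γ.Adj x y := by
  obtain ⟨w⟩ := hconn.preconnected a b
  exact walk_cross w ha hb

/-- any nodup list inside a clique is a chain -/
lemma chain'_of_clique {S : Set V} (hS : ∀ x ∈ S, ∀ y ∈ S, x ≠ y → Γ.Adj x y) :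
    ∀ (l : List V), (∀ x ∈ l, x ∈ S) → l.Nodup → List.IsChain Γ.Adj l
  | [], _, _ => List.isChain_nil
  | [_], _, _ => List.isChain_singleton _
  | x :: y :: r, hmem, hnd => by
    rw [List.isChain_cons_cons]
    refine ⟨hS x (hmem x (by simp)) y (hmem y (by simp)) ?_, ?_⟩
    · rintro rfl; simp at hnd
    · exact chain'_of_clique hS (y :: r) (fun z hz => hmem z (by simp [hz])) hnd.of_cons

/-- build a walk from a chain list -/
lemma walk_of_list : ∀ (l : List V) (hne : l ≠ []), List.IsChain Γ.Adj l →
    ∃ w : Γ.Walk (l.head hne) (l.getLast hne), w.support = l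
  | [], hne, _ => absurd rfl hne
  | [x], _, _ => ⟨Walk.nil, rfl⟩
  | x :: y :: r, _, hc => by
    rw [List.isChain_cons_cons] at hc
    obtain ⟨w, hw⟩ := walk_of_list (y :: r) (by simp) hc.2
    refine ⟨(Walk.cons hc.1 w).copy rfl ?_, ?_⟩
    simp [List.getLast_cons]
    exact (Walk.support_copy _ _ _).trans (congrArg (x :: ·) hw)

lemma edge_end_of_isPath {a b : V} {p : Γ.Walk a b} (hp : p.IsPath) (he : s(b, a) ∈ p.edges) :
    p.length = 1 := by
  cases p with
  | nil => simp at he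
  | @cons _ c _ h q =>
    rw [Walk.edges_cons, List.mem_cons] at he
    have hnd := hp.support_nodup
    rw [Walk.support_cons, List.nodup_cons] at hnd
    rcases he with he | he
    · rw [Sym2.eq_iff] at he
      rcases he with ⟨hba, -⟩ | ⟨hbc, -⟩
      · exact absurd (hba ▸ q.end_mem_support) hnd.1
      · subst hbc
        cases q with
        | nil => rfl
        | @cons _ d _ h' q' =>
          exfalso
          rw [Walk.support_cons, List.nodup_cons] at hnd
          exact hnd.2.1 q'.end_mem_support
    · exact absurd (q.snd_mem_support_of_mem_edges he) hnd.1

/-- a nodup chain list covering `V`, closed by an edge, gives a Hamiltonian cycle -/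
lemma ham_of_list (hcard : 3 ≤ Fintype.card V) (l : List V) (hc : List.IsChain Γ.Adj l)
    (hnd : l.Nodup) (hcov : ∀ x : V, x ∈ l) (hne : l ≠ [])
    (hclose : Γ.Adj (l.getLast hne) (l.head hne)) : Γ.IsHamiltonian := by
  intro _
  have hlen : l.length = Fintype.card V := by
    apply le_antisymm (hnd.length_le_card)
    classical
    have h1 : (Finset.univ : Finset V) ⊆ l.toFinset := fun x _ => by simp [hcov x]
    have h2 := Finset.card_le_card h1
    simp at h2
    exact le_trans h2 l.toFinset_card_le
  obtain ⟨u, t, rfl⟩ : ∃ u t, l = u :: t := by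
    cases l with
    | nil => exact absurd rfl hne
    | cons u t => exact ⟨u, t, rfl⟩
  have htne : t ≠ [] := by
    rintro rfl; simp at hlen; omega
  have hlast : (u :: t).getLast hne = t.getLast htne := List.getLast_cons htne
  -- the list t ++ [u]
  have hchain2 : List.IsChain Γ.Adj (t ++ [u]) := by
    rw [List.isChain_append]
    refine ⟨hc.tail, List.isChain_singleton u, ?_⟩
    intro x hx y hy
    rw [List.getLast?_eq_getLast htne] at hx
    simp only [Option.mem_some_iff, List.head?_cons] at hx hy
    subst hx; subst hy
    rw [hlast] at hclose; exact hclose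
  have hne2 : t ++ [u] ≠ [] := by simp
  obtain ⟨w, hw⟩ := walk_of_list (t ++ [u]) hne2 hchain2
  have hhead2 : (t ++ [u]).head hne2 = t.head htne := List.head_append_of_ne_nil htne
  have hlast2 : (t ++ [u]).getLast hne2 = u := List.getLast_append _
  let w' : Γ.Walk (t.head htne) u := w.copy hhead2 hlast2
  have hw' : w'.support = t ++ [u] := by simp [w', hw]
  have hadj : Γ.Adj u (t.head htne) := by
    obtain ⟨y, r, rfl⟩ : ∃ y r, t = y :: r := by
      cases t with
      | nil => exact absurd rfl htne
      | cons y r => exact ⟨y, r, rfl⟩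
    rw [List.isChain_cons_cons] at hc
    exact hc.1
  have hwpath : w'.IsPath := by
    rw [Walk.isPath_def, hw']
    rw [List.nodup_cons] at hnd
    simp only [List.nodup_append, List.nodup_cons, List.nodup_nil, and_true]
    exact ⟨hnd.2, by simp, fun a ha b hb hab => hnd.1 (by simp at hb; subst hb; subst hab; exact ha)⟩
  have hlenw : w'.length = Fintype.card V - 1 := by
    have h1 : (t ++ [u]).length = w'.length + 1 := by rw [← hw', Walk.length_support]
    have h2 : t.length + 1 = Fintype.card V := by simpa using hlen
    simp at h1
    omega
  have hcyc : (Walk.cons hadj w').IsCycle := by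
    rw [Walk.cons_isCycle_iff]
    refine ⟨hwpath, fun hmem => ?_⟩
    have := edge_end_of_isPath hwpath hmem
    omega
  refine ⟨u, Walk.cons hadj w', hcyc, ?_⟩
  rw [Walk.tail_cons]
  apply Walk.IsPath.isHamiltonian_of_mem
  · simpa using hwpath
  · intro x
    rw [← Walk.tail_cons, Walk.support_tail_of_not_nil _ Walk.not_nil_cons, Walk.support_cons, List.tail_cons, hw']
    have := hcov x
    simp only [List.mem_cons] at this
    rcases this with rfl | hx
    · simp
    · simp [hx]

/-- a Hamiltonian path of a clique with prescribed distinct endpoints, as a list -/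
lemma clique_list {S : Set V} (hS : ∀ x ∈ S, ∀ y ∈ S, x ≠ y → Γ.Adj x y)
    {a b : V} (ha : a ∈ S) (hb : b ∈ S) (hab : a ≠ b) :
    ∃ l : List V, List.IsChain Γ.Adj l ∧ l.Nodup ∧ (∀ x, x ∈ l ↔ x ∈ S) ∧
      ∃ hne : l ≠ [], l.head hne = a ∧ l.getLast hne = b := by
  classical
  set m : List V := (S.toFinset.erase a |>.erase b).toList with hm
  have hmmem : ∀ x, x ∈ m ↔ x ∈ S ∧ x ≠ a ∧ x ≠ b := by
    intro x
    simp only [hm, Finset.mem_toList, Finset.mem_erase, Set.mem_toFinset]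
    tauto
  set l : List V := (a :: m) ++ [b] with hl
  have hlmem : ∀ x, x ∈ l ↔ x ∈ S := by
    intro x
    simp only [hl, List.mem_append, List.mem_cons, List.mem_singleton, hmmem]
    constructor
    · rintro ((rfl | ⟨hx, -, -⟩) | rfl | hx)
      · assumption
      · assumption
      · assumption
      · cases hx
    · intro hx
      by_cases hxa : x = a
      · exact Or.inl (Or.inl hxa)
      by_cases hxb : x = b
      · exact Or.inr (Or.inl hxb)
      · exact Or.inl (Or.inr ⟨hx, hxa, hxb⟩)
  have hlnd : l.Nodup := by
    rw [hl, List.nodup_append]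
    refine ⟨?_, List.nodup_singleton _, ?_⟩
    · rw [List.nodup_cons]
      exact ⟨fun hx => (((hmmem a).1 hx).2.1) rfl, Finset.nodup_toList _⟩
    · intro x hx
      simp only [List.mem_singleton]
      rintro _ rfl rfl
      rcases List.mem_cons.1 hx with rfl | hx'
      · exact hab rfl
      · exact (((hmmem x).1 hx').2.2) rfl
  have hne : l ≠ [] := by simp [hl]
  refine ⟨l, ?_, hlnd, hlmem, hne, ?_, ?_⟩
  · exact chain'_of_clique hS l (fun x hx => (hlmem x).1 hx) hlnd
  · rfl
  · exact List.getLast_append _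

/-- Endgame: nonadjacent `u v` with at most one common neighbour gives Hamiltonicity. -/
lemma mpg_endgame (h : IsMPG Γ) (hcard : 3 ≤ Fintype.card V) {u v : V} (huv : u ≠ v)
    (hnadj : ¬Γ.Adj u v)
    (hM : ∀ w1 w2, Γ.Adj u w1 → Γ.Adj v w1 → Γ.Adj u w2 → Γ.Adj v w2 → w1 = w2) :
    Γ.IsHamiltonian := by
  classical
  have hcf := h.2.2.1
  have hconn := h.2.1
  set K1 : Set V := {x | x ≠ v ∧ ¬Γ.Adj v x} with hK1
  set K2 : Set V := {x | x ≠ u ∧ ¬Γ.Adj u x} with hK2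
  have hK1clique : ∀ x ∈ K1, ∀ y ∈ K1, x ≠ y → Γ.Adj x y := by
    intro x hx y hy hxy
    by_contra hne'
    exact mpg_no_indep3 hcf hxy hx.1 hy.1 hne' (fun ha => hx.2 ha.symm) (fun ha => hy.2 ha.symm)
  have hK2clique : ∀ x ∈ K2, ∀ y ∈ K2, x ≠ y → Γ.Adj x y := by
    intro x hx y hy hxy
    by_contra hne'
    exact mpg_no_indep3 hcf hxy hx.1 hy.1 hne' (fun ha => hx.2 ha.symm) (fun ha => hy.2 ha.symm)
  have huK1 : u ∈ K1 := ⟨huv, fun hadj => hnadj hadj.symm⟩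
  have hvK2 : v ∈ K2 := ⟨huv.symm, hnadj⟩
  have hdisj : ∀ x, x ∈ K1 → x ∈ K2 → False := by
    intro x hx1 hx2
    exact mpg_no_indep3 hcf hx2.1 hx1.1 (huv.symm : v ≠ u).symm (fun ha => hx2.2 ha.symm)
      (fun ha => hx1.2 ha.symm) hnadj
  have hvnK1 : v ∉ K1 := fun hv => hv.1 rfl
  have hunK2 : u ∉ K2 := fun hu => hu.1 rfl
  have hcover : ∀ x : V, x ∈ K1 ∨ x ∈ K2 ∨ (Γ.Adj u x ∧ Γ.Adj v x) := by
    intro x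
    by_cases hux : Γ.Adj u x
    · by_cases hvx : Γ.Adj v x
      · exact Or.inr (Or.inr ⟨hux, hvx⟩)
      · refine Or.inl ⟨?_, hvx⟩
        rintro rfl
        exact hnadj hux
    · by_cases hxu : x = u
      · exact Or.inl (hxu ▸ huK1)
      · exact Or.inr (Or.inl ⟨hxu, hux⟩)
  by_cases hMex : ∃ w, Γ.Adj u w ∧ Γ.Adj v w
  · obtain ⟨w, hwu, hwv⟩ := hMex
    have hwK1 : w ∉ K1 := fun hw => hw.2 hwv
    have hwK2 : w ∉ K2 := fun hw => hw.2 hwu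
    have hMw : ∀ x, Γ.Adj u x → Γ.Adj v x → x = w := fun x h1 h2 => hM x w h1 h2 hwu hwv
    by_cases hcr : ∃ a ∈ K1, ∃ b ∈ K2, Γ.Adj a b
    · -- build explicit Hamiltonian cycle  w - u ⋯ a - b ⋯ v - w
      obtain ⟨a, haK1, b, hbK2, hab⟩ := hcr
      have hau : a ≠ u := by
        rintro rfl
        exact hbK2.2 hab
      have hbv : b ≠ v := by
        rintro rfl
        exact haK1.2 hab.symm
      obtain ⟨lA, hcA, hndA, hmemA, hneA, hheadA, hlastA⟩ :=
        clique_list hK1clique huK1 haK1 (Ne.symm hau)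
      obtain ⟨lB, hcB, hndB, hmemB, hneB, hheadB, hlastB⟩ :=
        clique_list hK2clique hbK2 hvK2 hbv
      have hLne : (w :: (lA ++ lB)) ≠ [] := by simp
      have hlastL : (w :: (lA ++ lB)).getLast hLne = v := by
        rw [List.getLast_cons (show lA ++ lB ≠ [] by simp [hneB]),
          List.getLast_append_of_ne_nil _ hneB]
        exact hlastB
      apply ham_of_list hcard (w :: (lA ++ lB)) ?_ ?_ ?_ hLne ?_
      · -- chain
        rw [List.isChain_cons]
        constructor
        · intro y hy
          rw [List.head?_append_of_ne_nil _ hneA] at hy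
          rw [List.head?_eq_head hneA, Option.mem_some_iff] at hy
          subst hy
          rw [hheadA]
          exact hwu.symm
        · rw [List.isChain_append]
          refine ⟨hcA, hcB, ?_⟩
          intro x hx y hy
          rw [List.getLast?_eq_getLast hneA, Option.mem_some_iff] at hx
          rw [List.head?_eq_head hneB, Option.mem_some_iff] at hy
          subst hx; subst hy
          rw [hlastA, hheadB]
          exact hab
      · -- nodup
        rw [List.nodup_cons, List.nodup_append]
        refine ⟨?_, hndA, hndB, ?_⟩
        · intro hw
          rcases List.mem_append.1 hw with hw | hw
          · exact hwK1 ((hmemA w).1 hw)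
          · exact hwK2 ((hmemB w).1 hw)
        · intro x hx _ hx' rfl
          exact hdisj x ((hmemA x).1 hx) ((hmemB x).1 hx')
      · -- coverage
        intro x
        rw [List.mem_cons, List.mem_append, hmemA, hmemB]
        rcases hcover x with hx | hx | hx
        · exact Or.inr (Or.inl hx)
        · exact Or.inr (Or.inr hx)
        · exact Or.inl (hMw x hx.1 hx.2)
      · -- closing edge
        rw [hlastL]
        exact hwv
    · -- no K1–K2 edge : contradiction with minimality
      exfalso
      push_neg at hcr
      by_cases hs : ∃ a ∈ K1, ¬Γ.Adj w a
      · obtain ⟨a, haK1, hwa⟩ := hs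
        have hwb : ∀ b ∈ K2, Γ.Adj w b := by
          intro b hbK2
          by_contra hwb
          refine mpg_no_indep3 hcf (x := w) (y := a) (z := b) ?_ ?_ ?_ hwa hwb (hcr a haK1 b hbK2)
          · rintro rfl; exact hwK1 haK1
          · rintro rfl; exact hwK2 hbK2
          · rintro rfl; exact hdisj a haK1 hbK2
        -- L := K2 ∪ {w}
        refine mpg_bip h (L := K2 ∪ {w}) ?_ ?_ (x := w) (y := u) (by simp) ?_ hwu.symm
        · rintro x (hx | rfl) y (hy | rfl) hxy
          · exact hK2clique x hx y hy hxy
          · exact (hwb x hx).symm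
          · exact hwb y hy
          · exact absurd rfl hxy
        · intro x hx y hy hxy
          simp only [Set.mem_union, Set.mem_singleton_iff, not_or] at hx hy
          have hx1 : x ∈ K1 := by
            rcases hcover x with h1 | h1 | h1
            · exact h1
            · exact absurd h1 hx.1
            · exact absurd (hMw x h1.1 h1.2) hx.2
          have hy1 : y ∈ K1 := by
            rcases hcover y with h1 | h1 | h1
            · exact h1
            · exact absurd h1 hy.1
            · exact absurd (hMw y h1.1 h1.2) hy.2
          exact hK1clique x hx1 y hy1 hxy
        · simp only [Set.mem_union, Set.mem_singleton_iff, not_or]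
          exact ⟨hunK2, fun huw => hwK1 (huw ▸ huK1)⟩
      · push_neg at hs
        refine mpg_bip h (L := K1 ∪ {w}) ?_ ?_ (x := w) (y := v) (by simp) ?_ hwv.symm
        · rintro x (hx | rfl) y (hy | rfl) hxy
          · exact hK1clique x hx y hy hxy
          · exact (hs x hx).symm
          · exact hs y hy
          · exact absurd rfl hxy
        · intro x hx y hy hxy
          simp only [Set.mem_union, Set.mem_singleton_iff, not_or] at hx hy
          have hx1 : x ∈ K2 := by
            rcases hcover x with h1 | h1 | h1
            · exact absurd h1 hx.1
            · exact h1
            · exact absurd (hMw x h1.1 h1.2) hx.2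
          have hy1 : y ∈ K2 := by
            rcases hcover y with h1 | h1 | h1
            · exact absurd h1 hy.1
            · exact h1
            · exact absurd (hMw y h1.1 h1.2) hy.2
          exact hK2clique x hx1 y hy1 hxy
        · simp only [Set.mem_union, Set.mem_singleton_iff, not_or]
          exact ⟨hvnK1, fun hvw => hwK2 (hvw ▸ hvK2)⟩
  · -- no common neighbour: V = K1 ⊔ K2, contradiction
    exfalso
    push_neg at hMex
    have hcover2 : ∀ x, x ∉ K1 → x ∈ K2 := by
      intro x hx
      rcases hcover x with h1 | h1 | h1
      · exact absurd h1 hx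
      · exact h1
      · exact absurd h1.2 (hMex x h1.1)
    obtain ⟨x, hx, y, hy, hxy⟩ := mpg_cross hconn (S := K1) huK1 hvnK1
    exact mpg_bip h hK1clique (fun a ha b hb hab =>
      hK2clique a (hcover2 a ha) b (hcover2 b hb) hab) hx hy hxy

lemma head_eq_of_eq {α : Type*} : ∀ {l m : List α} (_ : l = m) (hl : l ≠ []) (hm : m ≠ []),
    l.head hl = m.head hm := by rintro l m rfl hl hm; rfl

lemma getLast_eq_of_eq {α : Type*} : ∀ {l m : List α} (_ : l = m) (hl : l ≠ []) (hm : m ≠ []),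
    l.getLast hl = m.getLast hm := by rintro l m rfl hl hm; rfl

lemma getElem_eq_of_eq {α : Type*} {l : List α} : ∀ {i j : ℕ} (_ : i = j) (hi : i < l.length)
    (hj : j < l.length), l[i] = l[j] := by rintro i j rfl hi hj; rfl

theorem mpg_ham (h : IsMPG Γ) : Γ.IsHamiltonian := by
  classical
  have hcf := h.2.2.1
  have hconn := h.2.1
  have hcard2 := h.1
  have hnonempty : Nonempty V := Fintype.card_pos_iff.1 (by omega)
  obtain ⟨u0⟩ := hnonempty
  -- at least 3 vertices
  have hcard3 : 3 ≤ Fintype.card V := by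
    by_contra h3
    have hc2 : Fintype.card V = 2 := by omega
    obtain ⟨v0, hv0⟩ := Fintype.exists_ne_of_one_lt_card (by omega) u0
    obtain ⟨w⟩ := hconn.preconnected u0 v0
    have hedge : ∃ c, Γ.Adj u0 c := by
      cases w with
      | nil => exact absurd rfl hv0
      | cons hadj p => exact ⟨_, hadj⟩
    obtain ⟨c, hc⟩ := hedge
    refine mpg_bip h (L := {u0}) ?_ ?_ (x := u0) (y := c) rfl ?_ hc
    · rintro x rfl y rfl hxy
      exact absurd rfl hxy
    · intro x hx y hy hxy
      exfalso
      have : ({u0, x, y} : Finset V).card ≤ Fintype.card V := Finset.card_le_univ _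
      rw [Finset.card_insert_of_notMem (by
          simp only [Finset.mem_insert, Finset.mem_singleton, not_or]
          exact ⟨fun h' => hx h'.symm, fun h' => hy h'.symm⟩),
        Finset.card_insert_of_notMem (by simpa using hxy)] at this
      simp [hc2] at this
    · exact fun h' => hc.ne (Set.mem_singleton_iff.1 h').symm
  -- maximal nodup chain list
  set P : ℕ → Prop := fun n => ∃ l : List V, List.IsChain Γ.Adj l ∧ l.Nodup ∧ l ≠ [] ∧
    l.length = n with hP
  have hP1 : P 1 := ⟨[u0], by simp, by simp, by simp, rfl⟩
  have hPbound : ∀ n, P n → n ≤ Fintype.card V := by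
    rintro n ⟨l, -, hnd, -, hlen⟩
    exact hlen ▸ hnd.length_le_card
  set N := Nat.findGreatest P (Fintype.card V) with hN
  have hPmax : P N := Nat.findGreatest_spec (by omega) hP1
  have hmax : ∀ n, P n → n ≤ N := fun n hn => Nat.le_findGreatest (hPbound n hn) hn
  obtain ⟨l, hc, hnd, hne, hlen⟩ := hPmax
  -- extension impossible at head and last
  have hext : ∀ z, z ∉ l → ¬Γ.Adj z (l.head hne) := by
    intro z hz hadj
    have hnew : P (N + 1) := by
      refine ⟨z :: l, ?_, List.nodup_cons.2 ⟨hz, hnd⟩, by simp, by simp [hlen]⟩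
      rw [List.isChain_cons]
      refine ⟨?_, hc⟩
      intro y hy
      rw [List.head?_eq_head hne, Option.mem_some_iff] at hy
      subst hy; exact hadj
    have := hmax _ hnew; omega
  have hext' : ∀ z, z ∉ l → ¬Γ.Adj z (l.getLast hne) := by
    intro z hz hadj
    have hnew : P (N + 1) := by
      refine ⟨l ++ [z], ?_, ?_, by simp, by simp [hlen]⟩
      · rw [List.isChain_append]
        refine ⟨hc, List.isChain_singleton _, ?_⟩
        intro x hx y hy
        rw [List.getLast?_eq_getLast hne, Option.mem_some_iff] at hx
        simp only [List.head?_cons, Option.mem_some_iff] at hy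
        subst hx; subst hy
        exact hadj.symm
      · rw [List.nodup_append]
        refine ⟨hnd, List.nodup_singleton _, ?_⟩
        intro x hx
        simp only [List.mem_singleton]
        rintro _ rfl rfl
        exact hz hx
    have := hmax _ hnew; omega
  -- the maximal list covers V
  have hcov : ∀ x : V, x ∈ l := by
    by_contra hcov
    push_neg at hcov
    obtain ⟨y0, hy0⟩ := hcov
    obtain ⟨x, hx, z, hz, hxz⟩ := mpg_cross hconn (S := {a | a ∈ l}) (l.head_mem hne) hy0
    have hzu := hext z hz
    have hzv := hext' z hz
    have hxu : x ≠ l.head hne := by rintro rfl; exact hzu hxz.symm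
    have hxv : x ≠ l.getLast hne := by rintro rfl; exact hzv hxz.symm
    have huv : l.head hne ≠ l.getLast hne := by
      intro heq
      obtain ⟨a, t, rfl⟩ : ∃ a t, l = a :: t := by
        cases l with
        | nil => exact absurd rfl hne
        | cons a t => exact ⟨a, t, rfl⟩
      cases t with
      | nil => exact hxu (List.mem_singleton.1 hx)
      | cons b t' =>
        rw [List.head_cons, List.getLast_cons (by simp : (b :: t') ≠ [])] at heq
        rw [List.nodup_cons] at hnd
        exact hnd.1 (heq ▸ List.getLast_mem (by simp : (b :: t') ≠ []))
    have hadjuv : Γ.Adj (l.head hne) (l.getLast hne) := by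
      by_contra hno
      refine mpg_no_indep3 hcf (x := z) (y := l.head hne) (z := l.getLast hne) ?_ ?_ huv
        hzu hzv hno
      · rintro rfl; exact hz (l.head_mem hne)
      · rintro rfl; exact hz (l.getLast_mem hne)
    obtain ⟨l1, l2, hsplit⟩ := List.append_of_mem hx
    have hl1ne : l1 ≠ [] := by
      rintro rfl
      have := head_eq_of_eq hsplit hne (by simp)
      simp at this
      exact hxu this.symm
    have hl2ne : l2 ≠ [] := by
      rintro rfl
      have := getLast_eq_of_eq hsplit hne (by simp)
      simp at this
      exact hxv this.symm
    have hheadl1 : l.head hne = l1.head hl1ne := by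
      rw [head_eq_of_eq hsplit hne (by simp [hl1ne]), List.head_append_of_ne_nil hl1ne]
    have hlastl2 : l.getLast hne = l2.getLast hl2ne := by
      rw [getLast_eq_of_eq hsplit hne (by simp),
        List.getLast_append_of_ne_nil _ (by simp : (x :: l2) ≠ []), List.getLast_cons hl2ne]
    -- new longer list z :: x :: (l2 ++ l1)
    have hcsplit : List.IsChain Γ.Adj l1 ∧ List.IsChain Γ.Adj (x :: l2) ∧
        ∀ a ∈ l1.getLast?, ∀ b ∈ (x :: l2).head?, Γ.Adj a b := by
      have := hc
      rw [hsplit, List.isChain_append] at this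
      exact this
    have hnew : P (N + 1) := by
      refine ⟨z :: x :: (l2 ++ l1), ?_, ?_, by simp, ?_⟩
      · rw [List.isChain_cons]
        constructor
        · intro y hy
          simp only [List.head?_cons, Option.mem_some_iff] at hy
          subst hy; exact hxz.symm
        rw [List.isChain_cons]
        constructor
        · intro y hy
          rw [List.head?_append_of_ne_nil _ hl2ne, List.head?_eq_head hl2ne,
            Option.mem_some_iff] at hy
          subst hy
          have := List.isChain_cons.1 hcsplit.2.1
          exact this.1 _ (by rw [List.head?_eq_head hl2ne]; rfl)
        · rw [List.isChain_append]
          refine ⟨hcsplit.2.1.tail, hcsplit.1, ?_⟩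
          intro a ha b hb
          rw [List.getLast?_eq_getLast hl2ne, Option.mem_some_iff] at ha
          rw [List.head?_eq_head hl1ne, Option.mem_some_iff] at hb
          subst ha; subst hb
          rw [← hlastl2, ← hheadl1]
          exact hadjuv.symm
      · have hperm : (z :: x :: (l2 ++ l1)).Perm (z :: l) := by
          refine List.Perm.cons z ?_
          rw [hsplit]
          calc x :: (l2 ++ l1) ~ x :: (l1 ++ l2) := List.Perm.cons x List.perm_append_comm
            _ ~ l1 ++ x :: l2 := List.perm_middle.symm
        exact hperm.symm.nodup (List.nodup_cons.2 ⟨(hz : z ∉ l), hnd⟩)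
      · have : l.length = l1.length + 1 + l2.length := by
          rw [hsplit]; simp; omega
        simp only [List.length_cons, List.length_append]
        omega
    have := hmax _ hnew; omega
  -- l is a hamiltonian list; set endpoints
  have hlenV : l.length = Fintype.card V := by
    apply le_antisymm hnd.length_le_card
    have h1 : (Finset.univ : Finset V) ⊆ l.toFinset := fun x _ => by simp [hcov x]
    have h2 := Finset.card_le_card h1
    simp at h2
    exact le_trans h2 l.toFinset_card_le
  have huv : l.head hne ≠ l.getLast hne := by
    intro heq
    obtain ⟨a, t, rfl⟩ : ∃ a t, l = a :: t := by
      cases l with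
      | nil => exact absurd rfl hne
      | cons a t => exact ⟨a, t, rfl⟩
    cases t with
    | nil => simp at hlenV; omega
    | cons b t' =>
      rw [List.head_cons, List.getLast_cons (by simp : (b :: t') ≠ [])] at heq
      rw [List.nodup_cons] at hnd
      exact hnd.1 (heq ▸ List.getLast_mem (by simp : (b :: t') ≠ []))
  by_cases hadjuv : Γ.Adj (l.head hne) (l.getLast hne)
  · exact ham_of_list hcard3 l hc hnd hcov hne hadjuv.symm
  -- endpoints non-adjacent
  have hu0' : l.head hne = l[0]'(by rw [hlenV]; omega) := List.head_eq_getElem hne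
  have hv0' : l.getLast hne = l[l.length - 1]'(by rw [hlenV]; omega) :=
    List.getLast_eq_getElem hne
  have hgetadj : ∀ i (hi : i + 1 < l.length), Γ.Adj (l[i]'(by omega)) (l[i+1]'hi) := by
    intro i hi
    have := List.isChain_iff_getElem.1 hc i (by omega)
    simpa [List.get_eq_getElem] using this
  by_cases hcross : ∃ i, ∃ hi : i + 1 < l.length,
      Γ.Adj (l.head hne) (l[i+1]'hi) ∧ Γ.Adj (l.getLast hne) (l[i]'(by omega))
  · -- rotation: explicit hamiltonian cycle
    obtain ⟨i, hi, hcu, hcv⟩ := hcross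
    have hi0 : i ≠ 0 := by
      rintro rfl
      rw [← hu0'] at hcv
      exact hadjuv hcv.symm
    set L : List V := l.take (i+1) ++ (l.drop (i+1)).reverse with hL
    have htake_ne : l.take (i+1) ≠ [] := List.ne_nil_of_length_pos (by
      rw [List.length_take]; omega)
    have hdrop_ne : l.drop (i+1) ≠ [] := List.ne_nil_of_length_pos (by
      rw [List.length_drop]; omega)
    have hdroprev_ne : (l.drop (i+1)).reverse ≠ [] := by simpa using hdrop_ne
    have hperm : L.Perm l := by
      rw [hL]
      calc l.take (i+1) ++ (l.drop (i+1)).reverse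
          ~ l.take (i+1) ++ l.drop (i+1) := List.Perm.append_left _ (List.reverse_perm _)
        _ = l := List.take_append_drop _ _
    have hLne : L ≠ [] := by
      intro h'
      rw [hL, List.append_eq_nil_iff] at h'
      exact htake_ne h'.1
    have hheadL : L.head hLne = l.head hne := by
      rw [head_eq_of_eq hL hLne (by rw [← hL]; exact hLne),
        List.head_append_of_ne_nil htake_ne, List.head_eq_getElem htake_ne,
        List.getElem_take]
      exact hu0'.symm
    have hlastL : L.getLast hLne = l[i+1]'hi := by
      rw [getLast_eq_of_eq hL hLne (by rw [← hL]; exact hLne),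
        List.getLast_append_of_ne_nil _ hdroprev_ne, List.getLast_reverse,
        List.head_eq_getElem hdrop_ne, List.getElem_drop]
    apply ham_of_list hcard3 L ?_ (hperm.symm.nodup hnd) (fun x => hperm.mem_iff.2 (hcov x)) hLne ?_
    · rw [hL, List.isChain_append]
      refine ⟨hc.take _, ?_, ?_⟩
      · rw [List.isChain_reverse]
        exact (hc.drop _).imp (fun a b hab => hab.symm)
      · intro a ha b hb
        rw [List.getLast?_eq_getLast htake_ne, Option.mem_some_iff] at ha
        rw [List.head?_eq_head hdroprev_ne, Option.mem_some_iff] at hb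
        subst ha; subst hb
        have e1 : (l.take (i+1)).getLast htake_ne = l[i]'(by omega) := by
          rw [List.getLast_eq_getElem htake_ne, List.getElem_take]
          exact getElem_eq_of_eq (by simp [List.length_take]; omega) _ _
        have e2 : ((l.drop (i+1)).reverse).head hdroprev_ne = l[l.length - 1]'(by omega) := by
          rw [List.head_reverse, List.getLast_eq_getElem hdrop_ne, List.getElem_drop]
          exact getElem_eq_of_eq (by simp [List.length_drop]; omega) _ _
        rw [e1, e2, ← hv0']
        exact hcv.symm
    · rw [hheadL, hlastL]
      exact hcu.symm
  · -- no crossing: at most one common neighbour, use the endgame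
    push_neg at hcross
    have hstar : ∀ j (hj : j + 1 < l.length), 1 ≤ j →
        Γ.Adj (l.head hne) (l[j+1]'hj) → Γ.Adj (l.head hne) (l[j]'(by omega)) := by
      intro j hj hj1 hadj
      have hnv : ¬Γ.Adj (l.getLast hne) (l[j]'(by omega)) := hcross j hj hadj
      by_contra hnu
      refine mpg_no_indep3 hcf (x := l.head hne) (y := l.getLast hne)
        (z := l[j]'(by omega)) huv ?_ ?_ hadjuv hnu hnv
      · rw [hu0']
        intro heq
        rw [hnd.getElem_inj_iff] at heq
        omega
      · rw [hv0']
        intro heq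
        rw [hnd.getElem_inj_iff] at heq
        omega
    have hdown : ∀ j (hj : j + 1 < l.length), Γ.Adj (l.head hne) (l[j+1]'hj) →
        ∀ k (hk : 1 ≤ k) (hk2 : k ≤ j + 1), Γ.Adj (l.head hne) (l[k]'(by omega)) := by
      intro j
      induction j with
      | zero =>
        intro hj hadj k hk hk2
        have : k = 1 := by omega
        subst this
        exact hadj
      | succ j ih =>
        intro hj hadj k hk hk2
        rcases Nat.lt_or_ge k (j + 2) with hlt | hge
        · exact ih (by omega) (hstar (j+1) hj (by omega) hadj) k hk (by omega)
        · have : k = j + 2 := by omega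
          subst this
          exact hadj
    have hM : ∀ w1 w2, Γ.Adj (l.head hne) w1 → Γ.Adj (l.getLast hne) w1 →
        Γ.Adj (l.head hne) w2 → Γ.Adj (l.getLast hne) w2 → w1 = w2 := by
      have hidx : ∀ w, Γ.Adj (l.head hne) w → Γ.Adj (l.getLast hne) w →
          ∃ j, ∃ hj : j + 1 < l.length, 1 ≤ j ∧ l[j]'(by omega) = w := by
        intro w h1 h2
        obtain ⟨j, hj, hw⟩ := List.getElem_of_mem (hcov w)
        have hj1 : 1 ≤ j := by
          rcases Nat.eq_zero_or_pos j with rfl | h'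
          · exfalso
            rw [← hw, ← hu0'] at h1
            exact Γ.irrefl h1
          · exact h'
        have hjlt : j + 1 < l.length := by
          rcases Nat.lt_or_ge (j+1) l.length with h' | h'
          · exact h'
          · exfalso
            have : j = l.length - 1 := by omega
            subst this
            rw [← hw, ← hv0'] at h2
            exact Γ.irrefl h2
        exact ⟨j, hjlt, hj1, hw⟩
      have key : ∀ j1 j2 (hj1 : j1 + 1 < l.length) (hj2 : j2 + 1 < l.length), 1 ≤ j1 → j1 < j2 →
          Γ.Adj (l.getLast hne) (l[j1]'(by omega)) →
          Γ.Adj (l.head hne) (l[j2]'(by omega)) → False := by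
        intro j1 j2 hj1 hj2 h1 hlt hadj1 hadj2
        have hnc := hcross j1 hj1
        apply hnc ?_ hadj1
        have := hdown (j2 - 1) (by omega) ?_ (j1 + 1) (by omega) (by omega)
        · convert this using 2
        · convert hadj2 using 2
          omega
      intro w1 w2 h1 h2 h3 h4
      obtain ⟨j1, hj1, hj1', hw1⟩ := hidx w1 h1 h2
      obtain ⟨j2, hj2, hj2', hw2⟩ := hidx w2 h3 h4
      rcases Nat.lt_trichotomy j1 j2 with hlt | heq | hgt
      · exact absurd (key j1 j2 hj1 hj2 hj1' hlt (hw1 ▸ h2) (hw2 ▸ h3)) id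
      · rw [← hw1, ← hw2, hnd.getElem_inj_iff]
        exact heq
      · exact absurd (key j2 j1 hj2 hj1 hj2' hgt (hw2 ▸ h4) (hw1 ▸ h1)) id
    exact mpg_endgame h hcard3 huv hadjuv hM

end MPGHamAux

/-- Every minimal prime graph is Hamiltonian. -/
theorem stmt11 {V : Type} [Fintype V] [DecidableEq V] (Γ : SimpleGraph V) (h : IsMPG Γ) :
    Γ.IsHamiltonian :=
  mpg_ham h
end

section
/- If Γ is a minimal prime graph that is self-complementary, then Γ is isomorphic to the cycle C_5 on five vertices. -/
open SimpleGraph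

section MPGAux
set_option linter.unusedSectionVars false
variable {V : Type} [Fintype V]

private lemma auxTri {G : SimpleGraph V} (h : G.CliqueFree 3) {x y z : V}
    (hxy : G.Adj x y) (hxz : G.Adj x z) (hyz : G.Adj y z) : False := by
  classical
  exact h {x, y, z} (SimpleGraph.is3Clique_iff.mpr ⟨x, y, z, hxy, hxz, hyz, rfl⟩)

private lemma auxCotri {G : SimpleGraph V} (h : Gᶜ.CliqueFree 3) {x y z : V}
    (hxy : x ≠ y) (hxz : x ≠ z) (hyz : y ≠ z)
    (nxy : ¬G.Adj x y) (nxz : ¬G.Adj x z) (nyz : ¬G.Adj y z) : False :=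
  auxTri h ((G.compl_adj x y).mpr ⟨hxy, nxy⟩) ((G.compl_adj x z).mpr ⟨hxz, nxz⟩)
    ((G.compl_adj y z).mpr ⟨hyz, nyz⟩)

private lemma twoNbrs {G : SimpleGraph V} (hG : G.CliqueFree 3) (hGc : Gᶜ.CliqueFree 3)
    (v : V) : ∃ x y : V, ∀ z, G.Adj v z → z = x ∨ z = y := by
  by_contra h
  push_neg at h
  obtain ⟨z1, hz1, -, -⟩ := h v v
  obtain ⟨z2, hz2, hz21, -⟩ := h z1 z1
  obtain ⟨z3, hz3, hz31, hz32⟩ := h z1 z2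
  exact auxCotri hGc (Ne.symm hz21) (Ne.symm hz31) (Ne.symm hz32)
    (fun hadj => auxTri hG hz1 hz2 hadj) (fun hadj => auxTri hG hz1 hz3 hadj)
    (fun hadj => auxTri hG hz2 hz3 hadj)

private lemma twoConbrs {G : SimpleGraph V} (hG : G.CliqueFree 3) (hGc : Gᶜ.CliqueFree 3)
    (v : V) : ∃ x y : V, ∀ z, z ≠ v → ¬G.Adj v z → z = x ∨ z = y := by
  have hGcc : Gᶜᶜ.CliqueFree 3 := by rwa [compl_compl]
  obtain ⟨x, y, hxy⟩ := twoNbrs hGc hGcc v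
  exact ⟨x, y, fun z hz hadj => hxy z ((G.compl_adj v z).mpr ⟨fun h => hz h.symm, hadj⟩)⟩

private lemma cardLeList (l : List V) (h : ∀ z : V, z ∈ l) :
    Fintype.card V ≤ l.length := by
  classical
  calc Fintype.card V = Finset.univ.card := (Finset.card_univ).symm
    _ ≤ l.toFinset.card := Finset.card_le_card (fun z _ => List.mem_toFinset.mpr (h z))
    _ ≤ l.length := l.toFinset_card_le

private lemma memListOfCard (l : List V) (hn : l.Nodup) (hc : Fintype.card V ≤ l.length) :
    ∀ z : V, z ∈ l := by
  classical
  have h1 : l.toFinset.card = l.length := List.toFinset_card_of_nodup hn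
  have h2 : l.toFinset.card = Fintype.card V :=
    le_antisymm (by simpa using Finset.card_le_univ l.toFinset) (by omega)
  have h3 := Finset.eq_univ_of_card l.toFinset h2
  intro z
  exact List.mem_toFinset.mp (h3 ▸ Finset.mem_univ z)

private lemma existsAdj {G : SimpleGraph V} (hc : G.Connected) (h2 : 2 ≤ Fintype.card V)
    (v : V) : ∃ w, G.Adj v w := by
  obtain ⟨w, hw⟩ := Fintype.exists_ne_of_one_lt_card (by omega) v
  obtain ⟨p⟩ := hc.preconnected v w
  cases p with
  | nil => exact absurd rfl hw
  | cons h _ => exact ⟨_, h⟩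

private lemma otherNbr {G : SimpleGraph V} {v u : V}
    (h : ∃ x y, G.Adj v x ∧ G.Adj v y ∧ x ≠ y ∧ ∀ z, G.Adj v z → z = x ∨ z = y)
    (hu : G.Adj v u) :
    ∃ w, G.Adj v w ∧ w ≠ u ∧ ∀ z, G.Adj v z → z = u ∨ z = w := by
  obtain ⟨x, y, hx, hy, hxy, hall⟩ := h
  rcases hall u hu with rfl | rfl
  · exact ⟨y, hy, hxy.symm, hall⟩
  · exact ⟨x, hx, hxy, fun z hz => (hall z hz).symm⟩

private lemma isoOfEnum {G : SimpleGraph V} (h5 : Fintype.card V = 5) (v0 v1 v2 v3 v4 : V)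
    (d01 : v0 ≠ v1) (d02 : v0 ≠ v2) (d03 : v0 ≠ v3) (d04 : v0 ≠ v4)
    (d12 : v1 ≠ v2) (d13 : v1 ≠ v3) (d14 : v1 ≠ v4)
    (d23 : v2 ≠ v3) (d24 : v2 ≠ v4) (d34 : v3 ≠ v4)
    (A01 : G.Adj v0 v1) (A12 : G.Adj v1 v2) (A23 : G.Adj v2 v3)
    (A34 : G.Adj v3 v4) (A40 : G.Adj v4 v0)
    (N02 : ¬G.Adj v0 v2) (N03 : ¬G.Adj v0 v3) (N13 : ¬G.Adj v1 v3)
    (N14 : ¬G.Adj v1 v4) (N24 : ¬G.Adj v2 v4) :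
    Nonempty (G ≃g cycleGraph 5) := by
  classical
  have A10 := A01.symm; have A21 := A12.symm; have A32 := A23.symm
  have A43 := A34.symm; have A04 := A40.symm
  have N20 : ¬G.Adj v2 v0 := fun h => N02 h.symm
  have N30 : ¬G.Adj v3 v0 := fun h => N03 h.symm
  have N31 : ¬G.Adj v3 v1 := fun h => N13 h.symm
  have N41 : ¬G.Adj v4 v1 := fun h => N14 h.symm
  have N42 : ¬G.Adj v4 v2 := fun h => N24 h.symm
  set f : Fin 5 → V := ![v0, v1, v2, v3, v4] with hf
  have hinj : Function.Injective f := by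
    intro i j hij
    fin_cases i <;> fin_cases j <;> simp_all [hf] <;> tauto
  have hbij : Function.Bijective f :=
    (Fintype.bijective_iff_injective_and_card f).mpr ⟨hinj, by simp [h5]⟩
  set e := Equiv.ofBijective f hbij with he
  have hAdj : ∀ i j : Fin 5, (cycleGraph 5).Adj i j ↔ G.Adj (f i) (f j) := by
    intro i j
    fin_cases i <;> fin_cases j <;>
      first
      | exact iff_of_true (by decide) (by assumption)
      | exact iff_of_false (by decide) (by simp [hf]; try assumption)
  refine ⟨⟨e.symm, ?_⟩⟩
  intro a b
  have ha : a = f (e.symm a) := (e.apply_symm_apply a).symm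
  have hb : b = f (e.symm b) := (e.apply_symm_apply b).symm
  rw [hAdj (e.symm a) (e.symm b), ← ha, ← hb]

end MPGAux

section MPGAux2
set_option linter.unusedSectionVars false
set_option maxHeartbeats 1000000
variable {V : Type} [Fintype V]

private lemma p4Contra {G : SimpleGraph V} (hG : IsMPG G) (a b c d : V)
    (hab : a ≠ b) (hac : a ≠ c) (had : a ≠ d) (hbc : b ≠ c) (hbd : b ≠ d) (hcd : c ≠ d)
    (henum : ∀ z : V, z = a ∨ z = b ∨ z = c ∨ z = d)
    (Pab : G.Adj a b) (Pbc : G.Adj b c) (Pcd : G.Adj c d)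
    (Nac : ¬G.Adj a c) (Nad : ¬G.Adj a d) (Nbd : ¬G.Adj b d) : False := by
  classical
  have Pba := Pab.symm; have Pcb := Pbc.symm; have Pdc := Pcd.symm
  have Nca : ¬G.Adj c a := fun h => Nac h.symm
  have Nda : ¬G.Adj d a := fun h => Nad h.symm
  have Ndb : ¬G.Adj d b := fun h => Nbd h.symm
  have hba := hab.symm; have hca := hac.symm; have hda := had.symm
  have hcb := hbc.symm; have hdb := hbd.symm; have hdc := hcd.symm
  have adj_iff : ∀ u w : V, (G.deleteEdges {s(b,c)})ᶜ.Adj u w ↔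
      u ≠ w ∧ (¬G.Adj u w ∨ s(u,w) = s(b,c)) := by
    intro u w
    simp only [compl_adj, deleteEdges_adj, Set.mem_singleton_iff]
    tauto
  apply hG.2.2.2.2 s(b,c) (G.mem_edgeSet.mpr Pbc)
  constructor
  · intro s hs
    rw [SimpleGraph.is3Clique_iff] at hs
    obtain ⟨x, y, z, hxy, hxz, hyz, -⟩ := hs
    rw [adj_iff] at hxy hxz hyz
    rcases henum x with rfl | rfl | rfl | rfl <;>
      rcases henum y with rfl | rfl | rfl | rfl <;>
        rcases henum z with rfl | rfl | rfl | rfl <;>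
          simp_all [Sym2.eq_iff]
  · refine ⟨Coloring.mk (fun v => if v = a ∨ v = b then (0 : Fin 3) else 1) ?_⟩
    intro u w huw
    rw [adj_iff] at huw
    rcases henum u with rfl | rfl | rfl | rfl <;>
      rcases henum w with rfl | rfl | rfl | rfl <;>
        simp_all [Sym2.eq_iff]

private lemma twoK2Contra {G : SimpleGraph V} (hconn : G.Connected) (a b c d : V)
    (hac : a ≠ c) (hbc : b ≠ c)
    (henum : ∀ z : V, z = a ∨ z = b ∨ z = c ∨ z = d)
    (Nac : ¬G.Adj a c) (Nad : ¬G.Adj a d) (Nbc : ¬G.Adj b c) (Nbd : ¬G.Adj b d) :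
    False := by
  have key : ∀ (x y : V) (_ : G.Walk x y), (x = a ∨ x = b) → (y = a ∨ y = b) := by
    intro x y p
    induction p with
    | nil => exact id
    | @cons u v w h p ih =>
      intro hx
      apply ih
      rcases henum v with rfl | rfl | rfl | rfl <;> rcases hx with rfl | rfl <;> simp_all
  obtain ⟨p⟩ := hconn.preconnected a c
  rcases key a c p (Or.inl rfl) with rfl | rfl
  · exact hac rfl
  · exact hbc rfl

private lemma case4core {G : SimpleGraph V} (hG : IsMPG G) (hG3 : G.CliqueFree 3)
    (hGc3 : Gᶜ.CliqueFree 3) (hconn : G.Connected) (hconnc : Gᶜ.Connected)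
    (a b c d : V)
    (hab : a ≠ b) (hac : a ≠ c) (had : a ≠ d) (hbc : b ≠ c) (hbd : b ≠ d) (hcd : c ≠ d)
    (henum : ∀ z : V, z = a ∨ z = b ∨ z = c ∨ z = d)
    (Nab : ¬G.Adj a b) : False := by
  have hcard2 : 2 ≤ Fintype.card V := hG.1
  obtain ⟨w, hw⟩ := existsAdj hconn hcard2 a
  have hA : G.Adj a c ∨ G.Adj a d := by
    rcases henum w with h | h | h | h
    · rw [h] at hw; exact absurd hw (G.loopless.irrefl a)
    · rw [h] at hw; exact absurd hw Nab
    · rw [h] at hw; exact Or.inl hw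
    · rw [h] at hw; exact Or.inr hw
  obtain ⟨w', hw'⟩ := existsAdj hconn hcard2 b
  have hB : G.Adj b c ∨ G.Adj b d := by
    rcases henum w' with h | h | h | h
    · rw [h] at hw'; exact absurd hw'.symm Nab
    · rw [h] at hw'; exact absurd hw' (G.loopless.irrefl b)
    · rw [h] at hw'; exact Or.inl hw'
    · rw [h] at hw'; exact Or.inr hw'
  clear hw hw'
  by_cases Pcd : G.Adj c d
  · have haone : ¬(G.Adj a c ∧ G.Adj a d) := fun h => auxTri hG3 h.1 h.2 Pcd
    have hbone : ¬(G.Adj b c ∧ G.Adj b d) := fun h => auxTri hG3 h.1 h.2 Pcd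
    rcases hA with h1 | h1 <;> rcases hB with h2 | h2
    · exact auxCotri hGc3 hab had hbd Nab (fun h => haone ⟨h1, h⟩) (fun h => hbone ⟨h2, h⟩)
    · exact p4Contra hG a c d b hac had hab hcd hbc.symm hbd.symm
        (fun z => by rcases henum z with h | h | h | h; exacts [Or.inl h, Or.inr (Or.inr (Or.inr h)), Or.inr (Or.inl h), Or.inr (Or.inr (Or.inl h))])
        h1 Pcd h2.symm (fun h => haone ⟨h1, h⟩) Nab (fun h => hbone ⟨h.symm, h2⟩)
    · exact p4Contra hG a d c b had hac hab hcd.symm hbd.symm hbc.symm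
        (fun z => by rcases henum z with h | h | h | h; exacts [Or.inl h, Or.inr (Or.inr (Or.inr h)), Or.inr (Or.inr (Or.inl h)), Or.inr (Or.inl h)])
        h1 Pcd.symm h2.symm (fun h => haone ⟨h, h1⟩) Nab (fun h => hbone ⟨h2, h.symm⟩)
    · exact auxCotri hGc3 hab hac hbc Nab (fun h => haone ⟨h, h1⟩) (fun h => hbone ⟨h, h2⟩)
  · have c1 := hA
    have c2 := hB
    have c3 : G.Adj a c ∨ G.Adj b c := by
      by_contra h; push_neg at h; exact auxCotri hGc3 hab hac hbc Nab h.1 h.2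
    have c4 : G.Adj a d ∨ G.Adj b d := by
      by_contra h; push_neg at h; exact auxCotri hGc3 hab had hbd Nab h.1 h.2
    by_cases xac : G.Adj a c <;> by_cases xad : G.Adj a d <;>
      by_cases xbc : G.Adj b c <;> by_cases xbd : G.Adj b d
    · -- TTTT : C4, complement is 2K2, contradicts Γᶜ connected
      exact twoK2Contra hconnc a b c d hac hbc henum
        (fun h => ((G.compl_adj a c).mp h).2 xac) (fun h => ((G.compl_adj a d).mp h).2 xad)
        (fun h => ((G.compl_adj b c).mp h).2 xbc) (fun h => ((G.compl_adj b d).mp h).2 xbd)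
    · -- TTTF : P4  d-a-c-b
      exact p4Contra hG d a c b had.symm hcd.symm hbd.symm hac hab hbc.symm
        (fun z => by rcases henum z with h | h | h | h; exacts [Or.inr (Or.inl h), Or.inr (Or.inr (Or.inr h)), Or.inr (Or.inr (Or.inl h)), Or.inl h])
        xad.symm xac xbc.symm (fun h => Pcd h.symm) (fun h => xbd h.symm) Nab
    · -- TTFT : P4  c-a-d-b
      exact p4Contra hG c a d b hac.symm hcd hbc.symm had hab hbd.symm
        (fun z => by rcases henum z with h | h | h | h; exacts [Or.inr (Or.inl h), Or.inr (Or.inr (Or.inr h)), Or.inl h, Or.inr (Or.inr (Or.inl h))])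
        xac.symm xad xbd.symm Pcd (fun h => xbc h.symm) Nab
    · rcases c2 with h | h; exacts [xbc h, xbd h]
    · -- TFTT : P4  a-c-b-d
      exact p4Contra hG a c b d hac hab had hbc.symm hcd hbd
        (fun z => by rcases henum z with h | h | h | h; exacts [Or.inl h, Or.inr (Or.inr (Or.inl h)), Or.inr (Or.inl h), Or.inr (Or.inr (Or.inr h))])
        xac xbc.symm xbd Nab xad Pcd
    · rcases c4 with h | h; exacts [xad h, xbd h]
    · -- TFFT : 2K2 (ac | bd)
      exact twoK2Contra hconn a c b d hab hbc.symm
        (fun z => by rcases henum z with h | h | h | h; exacts [Or.inl h, Or.inr (Or.inr (Or.inl h)), Or.inr (Or.inl h), Or.inr (Or.inr (Or.inr h))])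
        Nab xad (fun h => xbc h.symm) Pcd
    · rcases c2 with h | h; exacts [xbc h, xbd h]
    · -- FTTT : P4  a-d-b-c
      exact p4Contra hG a d b c had hab hac hbd.symm hcd.symm hbc
        (fun z => by rcases henum z with h | h | h | h; exacts [Or.inl h, Or.inr (Or.inr (Or.inl h)), Or.inr (Or.inr (Or.inr h)), Or.inr (Or.inl h)])
        xad xbd.symm xbc Nab xac (fun h => Pcd h.symm)
    · -- FTTF : 2K2 (ad | bc)
      exact twoK2Contra hconn a d b c hab hbd.symm
        (fun z => by rcases henum z with h | h | h | h; exacts [Or.inl h, Or.inr (Or.inr (Or.inl h)), Or.inr (Or.inr (Or.inr h)), Or.inr (Or.inl h)])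
        Nab xac (fun h => xbd h.symm) (fun h => Pcd h.symm)
    · rcases c3 with h | h; exacts [xac h, xbc h]
    · rcases c3 with h | h; exacts [xac h, xbc h]
    · rcases c1 with h | h; exacts [xac h, xad h]
    · rcases c1 with h | h; exacts [xac h, xad h]
    · rcases c1 with h | h; exacts [xac h, xad h]
    · rcases c1 with h | h; exacts [xac h, xad h]

end MPGAux2

set_option maxHeartbeats 1000000 in
/-- If `Γ` is a minimal prime graph that is self-complementary, then `Γ` is isomorphic to
the 5-cycle `C₅`. -/
theorem stmt13 {V : Type} [Fintype V] (Γ : SimpleGraph V)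
    (hΓ : IsMPG Γ) (hsc : Nonempty (Γ ≃g Γᶜ)) :
    Nonempty (Γ ≃g cycleGraph 5) := by
  classical
  obtain ⟨φ⟩ := hsc
  obtain ⟨hcard2, hconn, hGc3, -, -⟩ := id hΓ
  have hG3 : Γ.CliqueFree 3 := hGc3.comap φ.toEmbedding.isContained
  have hconnc : Γᶜ.Connected := (Iso.connected_iff φ).mp hconn
  have hV : Nonempty V := Fintype.card_pos_iff.mp (by omega)
  have hle5 : Fintype.card V ≤ 5 := by
    obtain ⟨v⟩ := hV
    obtain ⟨x1, y1, h1⟩ := twoNbrs hG3 hGc3 v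
    obtain ⟨x2, y2, h2⟩ := twoConbrs hG3 hGc3 v
    have hsub : ∀ z : V, z ∈ [v, x1, y1, x2, y2] := by
      intro z
      simp only [List.mem_cons, List.not_mem_nil, or_false]
      by_cases hzv : z = v
      · tauto
      · by_cases hadj : Γ.Adj v z
        · rcases h1 z hadj with rfl | rfl <;> tauto
        · rcases h2 z hzv hadj with rfl | rfl <;> tauto
    simpa using cardLeList _ hsub
  rcases (by omega : Fintype.card V = 2 ∨ Fintype.card V = 3 ∨ Fintype.card V = 4 ∨
      Fintype.card V = 5) with h2 | h3 | h4 | h5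
  · -- |V| = 2 : impossible
    exfalso
    obtain ⟨a, b, hab, huniv⟩ := Finset.card_eq_two.mp
      (show (Finset.univ : Finset V).card = 2 by rw [Finset.card_univ]; exact h2)
    have henum : ∀ z : V, z = a ∨ z = b := fun z => by
      have hz : z ∈ ({a, b} : Finset V) := huniv ▸ Finset.mem_univ z
      simpa using hz
    obtain ⟨w, hw⟩ := existsAdj hconn hcard2 a
    have Pab : Γ.Adj a b := by
      rcases henum w with h | h
      · rw [h] at hw; exact absurd hw (Γ.loopless.irrefl a)
      · rwa [h] at hw
    obtain ⟨w', hw'⟩ := existsAdj hconnc hcard2 a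
    have : Γᶜ.Adj a b := by
      rcases henum w' with h | h
      · rw [h] at hw'; exact absurd hw' (Γᶜ.loopless.irrefl a)
      · rwa [h] at hw'
    exact ((Γ.compl_adj a b).mp this).2 Pab
  · -- |V| = 3 : impossible
    exfalso
    obtain ⟨a, b, c, hab, hac, hbc, huniv⟩ := Finset.card_eq_three.mp
      (show (Finset.univ : Finset V).card = 3 by rw [Finset.card_univ]; exact h3)
    have henum : ∀ z : V, z = a ∨ z = b ∨ z = c := fun z => by
      have hz : z ∈ ({a, b, c} : Finset V) := huniv ▸ Finset.mem_univ z
      simpa using hz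
    obtain ⟨wa, hwa⟩ := existsAdj hconn hcard2 a
    obtain ⟨wb, hwb⟩ := existsAdj hconn hcard2 b
    obtain ⟨wc, hwc⟩ := existsAdj hconn hcard2 c
    obtain ⟨ua, hua⟩ := existsAdj hconnc hcard2 a
    obtain ⟨ub, hub⟩ := existsAdj hconnc hcard2 b
    obtain ⟨uc, huc⟩ := existsAdj hconnc hcard2 c
    rw [compl_adj] at hua hub huc
    have hA : Γ.Adj a b ∨ Γ.Adj a c := by
      rcases henum wa with h | h | h <;> rw [h] at hwa
      exacts [absurd hwa (Γ.loopless.irrefl a), Or.inl hwa, Or.inr hwa]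
    have hB : Γ.Adj a b ∨ Γ.Adj b c := by
      rcases henum wb with h | h | h <;> rw [h] at hwb
      exacts [Or.inl hwb.symm, absurd hwb (Γ.loopless.irrefl b), Or.inr hwb]
    have hC : Γ.Adj a c ∨ Γ.Adj b c := by
      rcases henum wc with h | h | h <;> rw [h] at hwc
      exacts [Or.inl hwc.symm, Or.inr hwc.symm, absurd hwc (Γ.loopless.irrefl c)]
    have nA : ¬Γ.Adj a b ∨ ¬Γ.Adj a c := by
      rcases henum ua with h | h | h <;> rw [h] at hua
      exacts [absurd rfl hua.1, Or.inl hua.2, Or.inr hua.2]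
    have nB : ¬Γ.Adj a b ∨ ¬Γ.Adj b c := by
      rcases henum ub with h | h | h <;> rw [h] at hub
      exacts [Or.inl (fun h => hub.2 h.symm), absurd rfl hub.1, Or.inr hub.2]
    have nC : ¬Γ.Adj a c ∨ ¬Γ.Adj b c := by
      rcases henum uc with h | h | h <;> rw [h] at huc
      exacts [Or.inl (fun h => huc.2 h.symm), Or.inr (fun h => huc.2 h.symm), absurd rfl huc.1]
    tauto
  · -- |V| = 4 : impossible
    exfalso
    obtain ⟨a⟩ := hV
    have h3' : (Finset.univ.erase a).card = 3 := by
      rw [Finset.card_erase_of_mem (Finset.mem_univ a), Finset.card_univ, h4]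
    obtain ⟨b, c, d, hbc, hbd, hcd, herase⟩ := Finset.card_eq_three.mp h3'
    have hmem : ∀ z : V, z ≠ a → (z = b ∨ z = c ∨ z = d) := fun z hz => by
      have hz' : z ∈ Finset.univ.erase a := Finset.mem_erase.mpr ⟨hz, Finset.mem_univ z⟩
      rw [herase] at hz'
      simpa using hz'
    have hab : a ≠ b := by
      have hb : b ∈ Finset.univ.erase a := by rw [herase]; simp
      exact fun h => (Finset.mem_erase.mp hb).1 h.symm
    have hac : a ≠ c := by
      have hc : c ∈ Finset.univ.erase a := by rw [herase]; simp
      exact fun h => (Finset.mem_erase.mp hc).1 h.symm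
    have had : a ≠ d := by
      have hd : d ∈ Finset.univ.erase a := by rw [herase]; simp
      exact fun h => (Finset.mem_erase.mp hd).1 h.symm
    have henum : ∀ z : V, z = a ∨ z = b ∨ z = c ∨ z = d := fun z => by
      by_cases hz : z = a
      exacts [Or.inl hz, Or.inr (hmem z hz)]
    obtain ⟨w, hw⟩ := existsAdj hconnc hcard2 a
    rw [compl_adj] at hw
    rcases hmem w (fun h => hw.1 h.symm) with h | h | h <;> rw [h] at hw
    · exact case4core hΓ hG3 hGc3 hconn hconnc a b c d hab hac had hbc hbd hcd henum hw.2
    · exact case4core hΓ hG3 hGc3 hconn hconnc a c b d hac hab had hbc.symm hcd hbd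
        (fun z => by rcases henum z with h' | h' | h' | h'; exacts [Or.inl h', Or.inr (Or.inr (Or.inl h')), Or.inr (Or.inl h'), Or.inr (Or.inr (Or.inr h'))]) hw.2
    · exact case4core hΓ hG3 hGc3 hconn hconnc a d b c had hab hac hbd.symm hcd.symm hbc
        (fun z => by rcases henum z with h' | h' | h' | h'; exacts [Or.inl h', Or.inr (Or.inr (Or.inl h')), Or.inr (Or.inr (Or.inr h')), Or.inr (Or.inl h')]) hw.2
  · -- |V| = 5 : Γ ≅ C₅
    have deg2 : ∀ v : V, ∃ x y, Γ.Adj v x ∧ Γ.Adj v y ∧ x ≠ y ∧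
        ∀ z, Γ.Adj v z → z = x ∨ z = y := by
      intro v
      obtain ⟨x1, y1, h1⟩ := twoNbrs hG3 hGc3 v
      obtain ⟨x2, y2, h2⟩ := twoConbrs hG3 hGc3 v
      by_cases hx : ∃ x y, Γ.Adj v x ∧ Γ.Adj v y ∧ x ≠ y
      · obtain ⟨x, y, hvx, hvy, hxy⟩ := hx
        refine ⟨x, y, hvx, hvy, hxy, fun z hz => ?_⟩
        have e1 := h1 z hz
        have e2 := h1 x hvx
        have e3 := h1 y hvy
        rcases e1 with rfl | rfl <;> rcases e2 with h' | h' <;> rcases e3 with h'' | h'' <;>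
          simp_all
      · exfalso
        push_neg at hx
        obtain ⟨w0, hw0⟩ := existsAdj hconn hcard2 v
        have hsub : ∀ z : V, z ∈ [v, w0, x2, y2] := by
          intro z
          simp only [List.mem_cons, List.not_mem_nil, or_false]
          by_cases hzv : z = v
          · tauto
          · by_cases hadj : Γ.Adj v z
            · have := hx z w0 hadj hw0
              tauto
            · rcases h2 z hzv hadj with rfl | rfl <;> tauto
        have := cardLeList _ hsub
        simp only [List.length_cons, List.length_nil] at this
        omega
    obtain ⟨v0⟩ := hV
    obtain ⟨v1, v4, A01, A04, d14, N0⟩ := deg2 v0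
    have N14 : ¬Γ.Adj v1 v4 := fun h => auxTri hG3 A01 A04 h
    have d01 : v0 ≠ v1 := A01.ne
    have d04 : v0 ≠ v4 := A04.ne
    obtain ⟨v2, A12, d20, N1⟩ := otherNbr (deg2 v1) A01.symm
    have d21 : v2 ≠ v1 := A12.ne'
    have d24 : v2 ≠ v4 := fun h => N14 (h ▸ A12)
    obtain ⟨v3, A43, d30, N4⟩ := otherNbr (deg2 v4) A04.symm
    have d34 : v3 ≠ v4 := A43.ne'
    have d31 : v3 ≠ v1 := fun h => N14 ((h ▸ A43).symm)
    have d32 : v3 ≠ v2 := by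
      intro hh
      subst hh
      have N2 : ∀ z, Γ.Adj v3 z → z = v1 ∨ z = v4 := by
        obtain ⟨w, hw, hwne, hN⟩ := otherNbr (deg2 v3) A12.symm
        rcases hN v4 A43.symm with h' | h'
        · exact absurd h'.symm d14
        · rw [← h'] at hN
          exact hN
      obtain ⟨u, hu⟩ : ∃ u : V, ¬(u = v0 ∨ u = v1 ∨ u = v3 ∨ u = v4) := by
        by_contra hcon
        push_neg at hcon
        have := cardLeList [v0, v1, v3, v4] (fun z => by
          simp only [List.mem_cons, List.not_mem_nil, or_false]
          exact hcon z)
        simp only [List.length_cons, List.length_nil] at this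
        omega
      push_neg at hu
      obtain ⟨hu0, hu1, hu3, hu4⟩ := hu
      obtain ⟨w, w', hw, -, -, -⟩ := deg2 u
      have hwmem := memListOfCard [v0, v1, v3, v4, u]
        (by simp [d01, d04, d14, Ne.symm d30, Ne.symm d31, d34,
              Ne.symm hu0, Ne.symm hu1, Ne.symm hu3, Ne.symm hu4])
        (by simp [h5]) w
      simp only [List.mem_cons, List.not_mem_nil, or_false] at hwmem
      rcases hwmem with h | h | h | h | h <;> rw [h] at hw
      · rcases N0 u hw.symm with h' | h'
        exacts [hu1 h', hu4 h']
      · rcases N1 u hw.symm with h' | h'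
        exacts [hu0 h', hu3 h']
      · rcases N2 u hw.symm with h' | h'
        exacts [hu1 h', hu4 h']
      · rcases N4 u hw.symm with h' | h'
        exacts [hu0 h', hu3 h']
      · exact Γ.loopless.irrefl u hw
    obtain ⟨w, hw, hwne1, N2⟩ := otherNbr (deg2 v2) A12.symm
    have hwne0 : w ≠ v0 := by
      intro h
      rw [h] at hw
      rcases N0 v2 hw.symm with h' | h'
      exacts [d21 h', d24 h']
    have hwne4 : w ≠ v4 := by
      intro h
      rw [h] at hw
      rcases N4 v2 hw.symm with h' | h'
      exacts [d20 h', d32 h'.symm]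
    have hwmem := memListOfCard [v0, v1, v2, v3, v4]
      (by simp [d01, d04, d14, Ne.symm d20, Ne.symm d21, d24,
            Ne.symm d30, Ne.symm d31, Ne.symm d32, d34])
      (by simp [h5]) w
    simp only [List.mem_cons, List.not_mem_nil, or_false] at hwmem
    have A23 : Γ.Adj v2 v3 := by
      rcases hwmem with h | h | h | h | h
      · exact absurd h hwne0
      · exact absurd h hwne1
      · rw [h] at hw; exact absurd hw (Γ.loopless.irrefl v2)
      · rwa [h] at hw
      · exact absurd h hwne4
    have N02 : ¬Γ.Adj v0 v2 := fun h => by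
      rcases N0 v2 h with h' | h'
      exacts [d21 h', d24 h']
    have N03 : ¬Γ.Adj v0 v3 := fun h => by
      rcases N0 v3 h with h' | h'
      exacts [d31 h', d34 h']
    have N13 : ¬Γ.Adj v1 v3 := fun h => by
      rcases N1 v3 h with h' | h'
      exacts [d30 h', d32 h']
    have N24 : ¬Γ.Adj v2 v4 := fun h => by
      rcases N4 v2 h.symm with h' | h'
      exacts [d20 h', d32 h'.symm]
    exact isoOfEnum h5 v0 v1 v2 v3 v4 d01 (Ne.symm d20) (Ne.symm d30) d04
      (Ne.symm d21) (Ne.symm d31) d14 (Ne.symm d32) d24 d34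
      A01 A12 A23 A43.symm A04.symm N02 N03 N13 N14 N24
end

section
/- If Γ is a minimal prime graph, then the chromatic number of the complement of Γ is exactly 3. -/
open SimpleGraph

lemma aux_twocol {V : Type} [Fintype V] (Γ : SimpleGraph V) (h : IsMPG Γ) :
    ¬ Γᶜ.Colorable 2 := by
  rintro ⟨f⟩
  obtain ⟨hcard, hconn, hcf, hcol, hmin⟩ := h
  -- there is an edge of Γ
  obtain ⟨u, v, huv⟩ := Fintype.exists_pair_of_one_lt_card hcard
  obtain ⟨w⟩ := hconn.preconnected u v
  have hadj : ∃ a b, Γ.Adj a b := by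
    cases w with
    | nil => exact absurd rfl huv
    | cons h' _ => exact ⟨_, _, h'⟩
  -- get an edge a b of Γ and a proper 2-coloring g of Γᶜ with g a ≠ g b
  have key : ∃ (g : V → Fin 2) (a b : V), Γ.Adj a b ∧ g a ≠ g b ∧
      ∀ x y, Γᶜ.Adj x y → g x ≠ g y := by
    by_cases hex : ∃ a b, Γ.Adj a b ∧ f a ≠ f b
    · obtain ⟨a, b, hab, hfab⟩ := hex
      exact ⟨f, a, b, hab, hfab, fun x y hxy => f.valid hxy⟩
    · push_neg at hex
      have hconst : ∀ x y : V, f x = f y := by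
        intro x y
        obtain ⟨w⟩ := hconn.preconnected x y
        induction w with
        | nil => rfl
        | cons h' _ ih => exact (hex _ _ h').trans ih
      have hedgeless : ∀ x y, ¬ Γᶜ.Adj x y := by
        intro x y hxy
        exact f.valid hxy (hconst x y)
      obtain ⟨a, b, hab⟩ := hadj
      classical
      refine ⟨fun x => if x = a then 0 else 1, a, b, hab, ?_,
        fun x y hxy => absurd hxy (hedgeless x y)⟩
      simp [Γ.ne_of_adj hab, (Γ.ne_of_adj hab).symm]
  obtain ⟨g, a, b, hab, hgab, hgood⟩ := key
  set e : Sym2 V := s(a, b)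
  -- g is a proper coloring of (Γ.deleteEdges {e})ᶜ
  have hprop : ∀ x y, (Γ.deleteEdges {e})ᶜ.Adj x y → g x ≠ g y := by
    intro x y hxy
    rw [compl_adj, deleteEdges_adj] at hxy
    obtain ⟨hne, hor⟩ := hxy
    push_neg at hor
    by_cases hxyadj : Γ.Adj x y
    · have := hor hxyadj
      simp only [Set.mem_singleton_iff, e] at this
      rw [Sym2.eq_iff] at this
      rcases this with ⟨rfl, rfl⟩ | ⟨rfl, rfl⟩
      · exact hgab
      · exact hgab.symm
    · exact hgood x y ((compl_adj Γ x y).mpr ⟨hne, hxyadj⟩)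
  have hC : (Γ.deleteEdges {e})ᶜ.Colorable 2 :=
    ⟨Coloring.mk g fun {x y} hxy => hprop x y hxy⟩
  exact hmin e ((Γ.mem_edgeSet).mpr hab)
    ⟨hC.cliqueFree (by norm_num), hC.mono (by norm_num)⟩

/-- If `Γ` is a minimal prime graph, then the chromatic number of its complement is
exactly 3. -/
theorem stmt18 {V : Type} [Fintype V] (Γ : SimpleGraph V) (h : IsMPG Γ) :
    Γᶜ.chromaticNumber = 3 := by
  have h3 : Γᶜ.Colorable 3 := h.2.2.2.1
  refine le_antisymm (by exact_mod_cast h3.chromaticNumber_le) ?_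
  have h2 : ¬ Γᶜ.chromaticNumber ≤ 2 := by
    rw [show ((2:ℕ∞)) = ((2:ℕ):ℕ∞) by norm_num, chromaticNumber_le_iff_colorable]
    exact aux_twocol Γ h
  rw [not_le] at h2
  exact Order.add_one_le_of_lt h2
end

section
/- A finite simple graph Γ with at least two vertices is a minimal prime graph if and only if its complement is a maximal triangle-free, 3-colorable graph whose chromatic number is exactly 3. -/
open SimpleGraph

/-- A maximal triangle-free, 3-colorable graph: triangle-free and 3-colorable, and adding
any edge yields a graph with a triangle or that is not 3-colorable. -/
def IsMaxTF3C {V : Type} [Fintype V] (H : SimpleGraph V) : Prop :=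
  H.CliqueFree 3 ∧ H.Colorable 3 ∧
    ∀ v w : V, v ≠ w → ¬ H.Adj v w →
      ¬((H ⊔ fromEdgeSet {s(v, w)}).CliqueFree 3 ∧
        (H ⊔ fromEdgeSet {s(v, w)}).Colorable 3)

section MyAux


variable {V : Type}

lemma myDelCompl (Γ : SimpleGraph V) {v w : V} (h : Γ.Adj v w) :
    (Γ.deleteEdges {s(v,w)})ᶜ = Γᶜ ⊔ fromEdgeSet {s(v,w)} := by
  ext a b
  simp only [compl_adj, deleteEdges_adj, Set.mem_singleton_iff, sup_adj, fromEdgeSet_adj]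
  tauto

lemma myMinIffMax [Fintype V] (Γ : SimpleGraph V) :
    (∀ e ∈ Γ.edgeSet,
      ¬((Γ.deleteEdges {e})ᶜ.CliqueFree 3 ∧ (Γ.deleteEdges {e})ᶜ.Colorable 3)) ↔
    (∀ v w : V, v ≠ w → ¬ Γᶜ.Adj v w →
      ¬((Γᶜ ⊔ fromEdgeSet {s(v, w)}).CliqueFree 3 ∧
        (Γᶜ ⊔ fromEdgeSet {s(v, w)}).Colorable 3)) := by
  constructor
  · intro h v w hne hn
    have hadj : Γ.Adj v w := by
      by_contra h'
      exact hn ((Γ.compl_adj v w).2 ⟨hne, h'⟩)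
    have := h s(v,w) ((Γ.mem_edgeSet).2 hadj)
    rwa [myDelCompl Γ hadj] at this
  · intro h e he
    induction e using Sym2.ind with
    | _ v w =>
      rw [Γ.mem_edgeSet] at he
      rw [myDelCompl Γ he]
      exact h v w he.ne (by simp [compl_adj, he])

lemma mySupColorable {H : SimpleGraph V} (C : H.Coloring (Fin 2)) (v w : V) :
    (H ⊔ fromEdgeSet {s(v, w)}).Colorable 3 := by
  have hlift : ∀ x : Fin 2, (Fin.castLE (by norm_num) x : Fin 3) ≠ 2 := by decide
  have hinj : ∀ x y : Fin 2, (Fin.castLE (by norm_num : (2:ℕ) ≤ 3) x) =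
      Fin.castLE (by norm_num) y → x = y := by decide
  classical
  refine ⟨SimpleGraph.Coloring.mk
    (fun x => if x = v then 2 else Fin.castLE (by norm_num) (C x)) ?_⟩
  rintro a b hab
  by_cases ha : a = v <;> by_cases hb : b = v
  · subst ha hb
    rcases hab with h | h
    · exact absurd rfl h.ne
    · exact absurd rfl h.ne
  · simp only [ha, hb, if_pos, if_neg, if_true]
    exact fun hh => hlift (C b) hh.symm
  · simp only [ha, hb, if_pos, if_neg]
    exact fun hh => hlift (C a) hh
  · simp only [ha, hb, if_neg]
    rcases hab with h | h
    · exact fun hh => (C.valid h) (hinj _ _ hh)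
    · rw [fromEdgeSet_adj, Set.mem_singleton_iff, Sym2.eq_iff] at h
      rcases h.1 with ⟨rfl, rfl⟩ | ⟨rfl, rfl⟩
      · exact absurd rfl ha
      · exact absurd rfl hb

lemma mySupCF3 {H : SimpleGraph V} (C : H.Coloring (Fin 2)) {v w : V}
    (hC : C v ≠ C w) : (H ⊔ fromEdgeSet {s(v,w)}).CliqueFree 3 := by
  classical
  have key : ∀ x y, (H ⊔ fromEdgeSet {s(v,w)}).Adj x y → C x ≠ C y := by
    rintro x y (h | h)
    · exact C.valid h
    · rw [fromEdgeSet_adj, Set.mem_singleton_iff, Sym2.eq_iff] at h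
      rcases h.1 with ⟨rfl, rfl⟩ | ⟨rfl, rfl⟩
      · exact hC
      · exact hC.symm
  intro t ht
  rw [is3Clique_iff] at ht
  obtain ⟨a, b, c, hab, hac, hbc, -⟩ := ht
  have h3 : ∀ x y z : Fin 2, x ≠ y → x ≠ z → y ≠ z → False := by decide
  exact h3 _ _ _ (key _ _ hab) (key _ _ hac) (key _ _ hbc)

lemma myWalkConst {Γ : SimpleGraph V} {C : V → Fin 2}
    (h : ∀ x y, Γ.Adj x y → C x = C y) {a b : V} (hr : Γ.Reachable a b) :
    C a = C b := by
  obtain ⟨p⟩ := hr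
  induction p with
  | nil => rfl
  | cons h' p ih => exact (h _ _ h').trans ih

lemma myNotCol2 [Fintype V] (Γ : SimpleGraph V) (hV : 2 ≤ Fintype.card V)
    (hconn : Γ.Connected)
    (hmin : ∀ v w : V, v ≠ w → ¬ Γᶜ.Adj v w →
      ¬((Γᶜ ⊔ fromEdgeSet {s(v, w)}).CliqueFree 3 ∧
        (Γᶜ ⊔ fromEdgeSet {s(v, w)}).Colorable 3)) :
    ¬ Γᶜ.Colorable 2 := by
  classical
  rintro ⟨C⟩
  by_cases hex : ∃ v w, Γ.Adj v w ∧ C v ≠ C w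
  · obtain ⟨v, w, hvw, hC⟩ := hex
    exact hmin v w hvw.ne (by simp [compl_adj, hvw])
      ⟨mySupCF3 C hC, mySupColorable C v w⟩
  · push_neg at hex
    -- C is constant along Γ-edges, hence on all of V (Γ connected), so Γᶜ has no edges
    have hempty : ∀ a b, ¬ Γᶜ.Adj a b := by
      intro a b hab
      exact C.valid hab (myWalkConst hex (hconn.preconnected a b))
    obtain ⟨v, w, hvw⟩ := Fintype.exists_pair_of_one_lt_card (α := V) (by omega)
    have hadj : Γ.Adj v w := by
      by_contra h'
      exact hempty v w ((Γ.compl_adj v w).2 ⟨hvw, h'⟩)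
    set C' : Γᶜ.Coloring (Fin 2) :=
      SimpleGraph.Coloring.mk (fun x => if x = v then 0 else 1)
        (fun h => absurd h (hempty _ _)) with hC'def
    have hC' : C' v ≠ C' w := by
      show ¬ (if v = v then (0:Fin 2) else 1) = (if w = v then 0 else 1)
      simp [Ne.symm hvw]
    exact hmin v w hvw (hempty v w) ⟨mySupCF3 C' hC', mySupColorable C' v w⟩

end MyAux

lemma myConnected {V : Type} [Fintype V] (Γ : SimpleGraph V) (hV : 2 ≤ Fintype.card V)
    (hcf : Γᶜ.CliqueFree 3) (hχ : Γᶜ.chromaticNumber = 3) : Γ.Connected := by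
  classical
  have hne : Nonempty V := Fintype.card_pos_iff.mp (by omega)
  rw [connected_iff]
  refine ⟨fun v w => ?_, hne⟩
  by_contra hvw
  have valid : ∀ {a b : V}, Γᶜ.Adj a b →
      (if Γ.Reachable v a then (0:Fin 2) else 1) ≠ (if Γ.Reachable v b then 0 else 1) := by
    intro a b hab
    by_cases hra : Γ.Reachable v a <;> by_cases hrb : Γ.Reachable v b
    · exfalso
      have haw : Γᶜ.Adj a w := by
        rw [compl_adj]
        refine ⟨fun h => hvw ?_, fun h => hvw (hra.trans h.reachable)⟩
        rwa [h] at hra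
      have hbw : Γᶜ.Adj b w := by
        rw [compl_adj]
        refine ⟨fun h => hvw ?_, fun h => hvw (hrb.trans h.reachable)⟩
        rwa [h] at hrb
      exact hcf {a, b, w} (is3Clique_triple_iff.2 ⟨hab, haw, hbw⟩)
    · simp [hra, hrb]
    · simp [hra, hrb]
    · exfalso
      have hav : Γᶜ.Adj a v := by
        rw [compl_adj]
        refine ⟨fun h => hra ?_, fun h => hra h.symm.reachable⟩
        rw [h]
      have hbv : Γᶜ.Adj b v := by
        rw [compl_adj]
        refine ⟨fun h => hrb ?_, fun h => hrb h.symm.reachable⟩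
        rw [h]
      exact hcf {a, b, v} (is3Clique_triple_iff.2 ⟨hab, hav, hbv⟩)
  have hcol : Γᶜ.Colorable 2 :=
    ⟨SimpleGraph.Coloring.mk (fun x => if Γ.Reachable v x then 0 else 1) valid⟩
  have hle := chromaticNumber_le_iff_colorable.2 hcol
  rw [hχ] at hle
  norm_num at hle



/-- A finite simple graph with at least two vertices is a minimal prime graph if and only
if its complement is a maximal triangle-free, 3-colorable graph with chromatic number
exactly 3. -/
theorem stmt19 {V : Type} [Fintype V] (Γ : SimpleGraph V) (hV : 2 ≤ Fintype.card V) :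
    IsMPG Γ ↔ (IsMaxTF3C Γᶜ ∧ Γᶜ.chromaticNumber = 3) := by
  constructor
  · rintro ⟨hcard, hconn, hcf, hcol, hmin⟩
    have hmax := (myMinIffMax Γ).1 hmin
    refine ⟨⟨hcf, hcol, hmax⟩, ?_⟩
    have h3 : Γᶜ.chromaticNumber ≤ 3 := by
      simpa using chromaticNumber_le_iff_colorable.2 hcol
    have h2 : ¬ Γᶜ.chromaticNumber ≤ 2 := by
      intro hle
      exact myNotCol2 Γ hV hconn hmax
        (chromaticNumber_le_iff_colorable.1 (by simpa using hle))
    refine le_antisymm h3 ?_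
    have hlt : (2:ℕ∞) < Γᶜ.chromaticNumber := lt_of_not_ge h2
    have := Order.add_one_le_of_lt hlt
    norm_num at this
    exact this
  · rintro ⟨⟨hcf, hcol, hmax⟩, hχ⟩
    exact ⟨hV, myConnected Γ hV hcf hχ, hcf, hcol, (myMinIffMax Γ).2 hmax⟩
end
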